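/- arXiv:1805.07532 — 4 statements merged into one kernel-verified Lean document; each statement's English description precedes it below -/
import Mathlib

section
/- The limit lim_{x→∞} x^γ v'(x) exists and equals ( γ / ( β + μ(1−γ) + (1/2)σ²γ(1−γ) ) )^γ > 0. -/
set_option maxHeartbeats 1000000

open Set Filter Topology Real


private lemma slope_tendsto_right {f : ℝ → ℝ} {d τ : ℝ} (h : HasDerivAt f d τ) :
    Tendsto (slope f τ) (𝓝[>] τ) (𝓝 d) :=
  (hasDerivAt_iff_tendsto_slope.1 h).mono_left
    (nhdsWithin_mono _ (fun s hs => ne_of_gt hs))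

private lemma slope_tendsto_left {f : ℝ → ℝ} {d τ : ℝ} (h : HasDerivAt f d τ) :
    Tendsto (slope f τ) (𝓝[<] τ) (𝓝 d) :=
  (hasDerivAt_iff_tendsto_slope.1 h).mono_left
    (nhdsWithin_mono _ (fun s hs => ne_of_lt hs))

lemma aux_right_pos {f : ℝ → ℝ} {d τ : ℝ} (h : HasDerivAt f d τ) (h0 : f τ = 0) (hd : 0 < d) :
    ∀ᶠ s in 𝓝[>] τ, 0 < f s := by
  have h3 : ∀ᶠ s in 𝓝[>] τ, 0 < slope f τ s :=
    (slope_tendsto_right h).eventually (eventually_gt_nhds hd)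
  filter_upwards [h3, self_mem_nhdsWithin] with s hs hs'
  rw [slope_def_field, h0, sub_zero] at hs
  have h4 : 0 < s - τ := sub_pos.2 hs'
  have := mul_pos hs h4
  rwa [div_mul_cancel₀ _ (ne_of_gt h4)] at this

lemma aux_right_neg {f : ℝ → ℝ} {d τ : ℝ} (h : HasDerivAt f d τ) (h0 : f τ = 0) (hd : d < 0) :
    ∀ᶠ s in 𝓝[>] τ, f s < 0 := by
  have h3 : ∀ᶠ s in 𝓝[>] τ, slope f τ s < 0 :=
    (slope_tendsto_right h).eventually (eventually_lt_nhds hd)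
  filter_upwards [h3, self_mem_nhdsWithin] with s hs hs'
  rw [slope_def_field, h0, sub_zero] at hs
  have h4 : 0 < s - τ := sub_pos.2 hs'
  have := mul_neg_of_neg_of_pos hs h4
  rwa [div_mul_cancel₀ _ (ne_of_gt h4)] at this

lemma aux_left_pos {f : ℝ → ℝ} {d τ : ℝ} (h : HasDerivAt f d τ) (h0 : f τ = 0) (hd : d < 0) :
    ∀ᶠ s in 𝓝[<] τ, 0 < f s := by
  have h3 : ∀ᶠ s in 𝓝[<] τ, slope f τ s < 0 :=
    (slope_tendsto_left h).eventually (eventually_lt_nhds hd)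
  filter_upwards [h3, self_mem_nhdsWithin] with s hs hs'
  rw [slope_def_field, h0, sub_zero] at hs
  have h4 : s - τ < 0 := sub_neg.2 hs'
  have := mul_pos_of_neg_of_neg hs h4
  rwa [div_mul_cancel₀ _ (ne_of_lt h4)] at this

lemma tendsto_of_monotoneOn_bdd {f : ℝ → ℝ} {T M : ℝ}
    (hm : MonotoneOn f (Ici T)) (hb : ∀ t, T ≤ t → f t ≤ M) :
    ∃ L, Tendsto f atTop (𝓝 L) := by
  set g := fun t => f (max t T) with hg'
  have hg : Monotone g := fun s t hst =>
    hm (mem_Ici.2 (le_max_right _ _)) (mem_Ici.2 (le_max_right _ _)) (max_le_max hst le_rfl)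
  have hbdd : BddAbove (range g) := by
    refine ⟨M, ?_⟩
    rintro y ⟨t, rfl⟩
    exact hb _ (le_max_right _ _)
  refine ⟨⨆ t, g t, Tendsto.congr' ?_ (tendsto_atTop_ciSup hg hbdd)⟩
  filter_upwards [eventually_ge_atTop T] with t ht
  simp [hg', max_eq_left ht]


lemma deriv_limit_eq_zero {f d : ℝ → ℝ} {T L M : ℝ}
    (hf : ∀ t, T ≤ t → HasDerivAt f (d t) t)
    (h1 : Tendsto f atTop (𝓝 L)) (h2 : Tendsto d atTop (𝓝 M)) : M = 0 := by
  have key : ∀ n : ℕ, ∃ c ∈ Ioo (T + n) (T + n + 1), d c = f (T + n + 1) - f (T + n) := by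
    intro n
    have hab : T + (n:ℝ) < T + n + 1 := by linarith
    have hcont : ContinuousOn f (Icc (T + n) (T + n + 1)) := by
      intro x hx
      have : T ≤ T + (n:ℝ) := by simp [le_add_iff_nonneg_right]
      exact ((hf x (le_trans this hx.1)).continuousAt).continuousWithinAt
    have hder : ∀ x ∈ Ioo (T + (n:ℝ)) (T + n + 1), HasDerivAt f (d x) x := by
      intro x hx
      have : T ≤ T + (n:ℝ) := by simp [le_add_iff_nonneg_right]
      exact hf x (le_trans this hx.1.le)
    obtain ⟨c, hc, hceq⟩ := exists_hasDerivAt_eq_slope f d hab hcont hder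
    refine ⟨c, hc, ?_⟩
    rw [hceq]
    ring_nf
  choose c hc hceq using key
  have hctop : Tendsto c atTop atTop := by
    apply tendsto_atTop_mono (fun n => ((hc n).1.le))
    apply tendsto_atTop_add_const_left
    exact tendsto_natCast_atTop_atTop
  have l1 : Tendsto (fun n => d (c n)) atTop (𝓝 M) := h2.comp hctop
  have l2 : Tendsto (fun n : ℕ => f (T + n + 1) - f (T + n)) atTop (𝓝 (L - L)) := by
    apply Tendsto.sub
    · exact h1.comp (by apply tendsto_atTop_add_const_right; apply tendsto_atTop_add_const_left; exact tendsto_natCast_atTop_atTop)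
    · exact h1.comp (by apply tendsto_atTop_add_const_left; exact tendsto_natCast_atTop_atTop)
  have l3 : Tendsto (fun n => d (c n)) atTop (𝓝 (L - L)) := l2.congr (fun n => (hceq n).symm)
  have := tendsto_nhds_unique l1 l3
  simpa using this

lemma barbalat {W P d : ℝ → ℝ} {T B L : ℝ} (hB0 : 0 < B)
    (hW : ∀ t, T ≤ t → HasDerivAt W (P t) t)
    (hP : ∀ t, T ≤ t → HasDerivAt P (d t) t)
    (hd : ∀ t, T ≤ t → |d t| ≤ B)
    (hL : Tendsto W atTop (𝓝 L)) : Tendsto P atTop (𝓝 0) := by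
  rw [Metric.tendsto_atTop]
  intro ε hε
  set h := min 1 (ε / (2 * B)) with hhdef
  have hh0 : 0 < h := lt_min one_pos (by positivity)
  have hBh : B * h ≤ ε / 2 := by
    have : h ≤ ε / (2 * B) := min_le_right _ _
    calc B * h ≤ B * (ε / (2 * B)) := by nlinarith
    _ = ε / 2 := by field_simp
  obtain ⟨N, hN⟩ := Metric.tendsto_atTop.1 hL (ε * h / 5) (by positivity)
  refine ⟨max N T, fun t ht => ?_⟩
  have htN : N ≤ t := le_trans (le_max_left _ _) ht
  have htT : T ≤ t := le_trans (le_max_right _ _) ht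
  rw [Real.dist_eq, sub_zero]
  by_contra hcon
  push_neg at hcon
  -- |P t| ≥ ε ; P s stays within ε/2 of P t on [t, t+h]
  have key : ∀ s ∈ Icc t (t + h), |P s - P t| ≤ ε / 2 := by
    intro s hs
    rcases eq_or_lt_of_le hs.1 with rfl | hlt
    · simp only [sub_self, abs_zero]; linarith
    · have hcont : ContinuousOn P (Icc t s) := fun x hx =>
        ((hP x (le_trans htT hx.1)).continuousAt).continuousWithinAt
      have hder : ∀ x ∈ Ioo t s, HasDerivAt P (d x) x := fun x hx =>
        hP x (le_trans htT hx.1.le)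
      obtain ⟨ξ, hξ, hξeq⟩ := exists_hasDerivAt_eq_slope P d hlt hcont hder
      have h1 : P s - P t = d ξ * (s - t) := by
        rw [eq_div_iff (by intro hc; rw [sub_eq_zero] at hc; exact absurd hc.symm (ne_of_lt hlt) : s - t ≠ 0)] at hξeq
        linarith [hξeq]
      rw [h1, abs_mul]
      have h2 : |d ξ| ≤ B := hd ξ (le_trans htT hξ.1.le)
      have h3 : |s - t| ≤ h := by
        rw [abs_of_nonneg (by linarith : (0:ℝ) ≤ s - t)]
        linarith [hs.2]
      calc |d ξ| * |s - t| ≤ B * h := mul_le_mul h2 h3 (abs_nonneg _) hB0.le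
      _ ≤ ε / 2 := hBh
  -- MVT for W on [t, t+h]
  have hcontW : ContinuousOn W (Icc t (t + h)) := fun x hx =>
    ((hW x (le_trans htT hx.1)).continuousAt).continuousWithinAt
  have hderW : ∀ x ∈ Ioo t (t + h), HasDerivAt W (P x) x := fun x hx =>
    hW x (le_trans htT hx.1.le)
  obtain ⟨ξ, hξ, hξeq⟩ := exists_hasDerivAt_eq_slope W P (by linarith) hcontW hderW
  have hWdiff : W (t + h) - W t = P ξ * h := by
    rw [eq_div_iff (by linarith : t + h - t ≠ 0)] at hξeq
    have : t + h - t = h := by ring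
    rw [this] at hξeq
    linarith
  have hPξ : ε / 2 ≤ |P ξ| := by
    have h1 : |P ξ - P t| ≤ ε / 2 := key ξ ⟨hξ.1.le, hξ.2.le⟩
    have h2 : |P t| ≤ |P ξ - P t| + |P ξ| := by
      calc |P t| = |P ξ - (P ξ - P t)| := by ring_nf
      _ ≤ |P ξ| + |P ξ - P t| := abs_sub _ _
      _ = |P ξ - P t| + |P ξ| := by ring
    linarith
  have hWbig : ε * h / 2 ≤ |W (t + h) - W t| := by
    rw [hWdiff, abs_mul, abs_of_nonneg hh0.le]
    nlinarith
  have hWsmall : |W (t + h) - W t| < 2 * (ε * h / 5) := by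
    have d1 := hN (t + h) (by linarith)
    have d2 := hN t htN
    rw [Real.dist_eq] at d1 d2
    calc |W (t + h) - W t| = |(W (t + h) - L) + (L - W t)| := by ring_nf
    _ ≤ |W (t + h) - L| + |L - W t| := abs_add_le _ _
    _ = |W (t + h) - L| + |W t - L| := by rw [abs_sub_comm L]
    _ < 2 * (ε * h / 5) := by linarith
  nlinarith


lemma concave_slope_bounds {v v' : ℝ → ℝ} (hconc : ConcaveOn ℝ (Ioi 0) v)
    (hv'deriv : ∀ x, 0 < x → HasDerivAt v (v' x) x) :
    ∀ x y : ℝ, 0 < x → x < y → v y - v x ≤ v' x * (y - x) ∧ v' y * (y - x) ≤ v y - v x := by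
  intro x y hx hxy
  have hy : 0 < y := lt_trans hx hxy
  have hyx : 0 < y - x := sub_pos.2 hxy
  have fact1 : ∀ s, x < s → s < y → (v y - v x) / (y - x) ≤ (v s - v x) / (s - x) := by
    intro s h1 h2
    have hs : 0 < s := lt_trans hx h1
    have hadj := hconc.slope_anti_adjacent (mem_Ioi.2 hx) (mem_Ioi.2 hy) h1 h2
    have ha : 0 < s - x := sub_pos.2 h1
    have hb : 0 < y - s := sub_pos.2 h2
    rw [div_le_div_iff₀ hb ha] at hadj
    rw [div_le_div_iff₀ hyx ha]
    nlinarith [hadj]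
  have fact2 : ∀ s, x < s → s < y → (v y - v s) / (y - s) ≤ (v y - v x) / (y - x) := by
    intro s h1 h2
    have hadj := hconc.slope_anti_adjacent (mem_Ioi.2 hx) (mem_Ioi.2 hy) h1 h2
    have ha : 0 < s - x := sub_pos.2 h1
    have hb : 0 < y - s := sub_pos.2 h2
    rw [div_le_div_iff₀ hb ha] at hadj
    rw [div_le_div_iff₀ hb hyx]
    nlinarith [hadj]
  constructor
  · -- tangent at x
    have htend : Tendsto (slope v x) (𝓝[>] x) (𝓝 (v' x)) :=
      (hasDerivAt_iff_tendsto_slope.1 (hv'deriv x hx)).mono_left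
        (nhdsWithin_mono _ (fun s hs => ne_of_gt hs))
    have hge : (v y - v x) / (y - x) ≤ v' x := by
      refine ge_of_tendsto htend ?_
      have hIoo : Ioo x y ∈ 𝓝[>] x := Ioo_mem_nhdsGT_of_mem ⟨le_refl x, hxy⟩
      filter_upwards [hIoo] with s hs
      rw [slope_def_field]
      exact fact1 s hs.1 hs.2
    rw [div_le_iff₀ hyx] at hge
    linarith
  · -- derivative at y below the chord
    have htend : Tendsto (slope v y) (𝓝[<] y) (𝓝 (v' y)) :=
      (hasDerivAt_iff_tendsto_slope.1 (hv'deriv y hy)).mono_left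
        (nhdsWithin_mono _ (fun s hs => ne_of_lt hs))
    have hle : v' y ≤ (v y - v x) / (y - x) := by
      refine le_of_tendsto htend ?_
      have hIoo : Ioo x y ∈ 𝓝[<] y := Ioo_mem_nhdsLT_of_mem ⟨hxy, le_refl y⟩
      filter_upwards [hIoo] with s hs
      obtain ⟨hs1, hs2⟩ := hs
      rw [slope_def_field]
      have heq : (v s - v y) / (s - y) = (v y - v s) / (y - s) := by
        rw [div_eq_div_iff (by intro h; rw [sub_eq_zero] at h; exact absurd h (ne_of_lt hs2) : s - y ≠ 0) (by intro h; rw [sub_eq_zero] at h; exact absurd h (ne_of_gt hs2) : y - s ≠ 0)]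
        ring
      rw [heq]
      exact fact2 s hs1 hs2
    rw [le_div_iff₀ hyx] at hle
    linarith

lemma deriv2_nonpos {v v' v'' : ℝ → ℝ} (hconc : ConcaveOn ℝ (Ioi 0) v)
    (hv'deriv : ∀ x, 0 < x → HasDerivAt v (v' x) x)
    (hv''deriv : ∀ x, 0 < x → HasDerivAt v' (v'' x) x) :
    ∀ x, 0 < x → v'' x ≤ 0 := by
  intro x hx
  have hanti : ∀ s, x < s → v' s ≤ v' x := by
    intro s hs
    obtain ⟨h1, h2⟩ := concave_slope_bounds hconc hv'deriv x s hx hs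
    have h3 : 0 < s - x := sub_pos.2 hs
    nlinarith
  have htend : Tendsto (slope v' x) (𝓝[>] x) (𝓝 (v'' x)) :=
    (hasDerivAt_iff_tendsto_slope.1 (hv''deriv x hx)).mono_left
      (nhdsWithin_mono _ (fun s hs => ne_of_gt hs))
  refine le_of_tendsto htend ?_
  filter_upwards [self_mem_nhdsWithin] with s hs
  rw [slope_def_field]
  apply div_nonpos_of_nonpos_of_nonneg
  · have := hanti s hs
    linarith
  · have : x < s := hs
    linarith

lemma eventually_sign_definite {P Q Qd : ℝ → ℝ} {k T : ℝ}
    (hP : ∀ t, T ≤ t → HasDerivAt P (Q t - k * P t) t)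
    (hQ : ∀ t, T ≤ t → HasDerivAt Q (Qd t) t)
    (hc : ∀ t, T ≤ t → 0 ≤ P t → Q t = 0 → 0 < Qd t) :
    (∃ T₂, T ≤ T₂ ∧ ∀ t, T₂ ≤ t → 0 ≤ P t) ∨ (∃ T₂, T ≤ T₂ ∧ ∀ t, T₂ ≤ t → P t ≤ 0) := by
  -- Invariance of the nonnegative quadrant
  have inv : ∀ t₀, T ≤ t₀ → 0 ≤ P t₀ → 0 ≤ Q t₀ → ∀ t, t₀ ≤ t → 0 ≤ P t ∧ 0 ≤ Q t := by
    intro t₀ hTt₀ hP0 hQ0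
    by_contra hcon
    push_neg at hcon
    obtain ⟨t₁, ht₁, hbad₁⟩ := hcon
    set Bad : Set ℝ := {t | t₀ ≤ t ∧ (P t < 0 ∨ Q t < 0)} with hBadDef
    have hBadne : Bad.Nonempty := by
      refine ⟨t₁, ht₁, ?_⟩
      by_cases h0 : 0 ≤ P t₁
      · exact Or.inr (hbad₁ h0)
      · exact Or.inl (not_le.1 h0)
    have hbdd : BddBelow Bad := ⟨t₀, fun b hb => hb.1⟩
    set τ := sInf Bad with hτdef
    have hτ_lb : t₀ ≤ τ := le_csInf hBadne (fun b hb => hb.1)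
    have hTτ : T ≤ τ := le_trans hTt₀ hτ_lb
    have hgood : ∀ t, t₀ ≤ t → t < τ → 0 ≤ P t ∧ 0 ≤ Q t := by
      intro t h1 h2
      by_contra hbad
      push_neg at hbad
      have ht : t ∈ Bad := by
        refine ⟨h1, ?_⟩
        by_cases h0 : 0 ≤ P t
        · exact Or.inr (hbad h0)
        · exact Or.inl (not_le.1 h0)
      exact absurd (csInf_le hbdd ht) (not_le.2 h2)
    have hPτ : 0 ≤ P τ := by
      rcases eq_or_lt_of_le hτ_lb with heq | hlt
      · rw [← heq]; exact hP0
      · have hcont : ContinuousWithinAt P (Iio τ) τ :=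
          ((hP τ hTτ).continuousAt).continuousWithinAt
        refine ge_of_tendsto hcont.tendsto ?_
        have hIoo : Ioo t₀ τ ∈ 𝓝[<] τ := Ioo_mem_nhdsLT_of_mem ⟨hlt, le_refl τ⟩
        filter_upwards [hIoo] with s hs
        exact (hgood s hs.1.le hs.2).1
    have hQτ : 0 ≤ Q τ := by
      rcases eq_or_lt_of_le hτ_lb with heq | hlt
      · rw [← heq]; exact hQ0
      · have hcont : ContinuousWithinAt Q (Iio τ) τ :=
          ((hQ τ hTτ).continuousAt).continuousWithinAt
        refine ge_of_tendsto hcont.tendsto ?_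
        have hIoo : Ioo t₀ τ ∈ 𝓝[<] τ := Ioo_mem_nhdsLT_of_mem ⟨hlt, le_refl τ⟩
        filter_upwards [hIoo] with s hs
        exact (hgood s hs.1.le hs.2).2
    -- a right neighborhood where both are nonnegative
    have hQnbhd : ∀ᶠ s in 𝓝[>] τ, 0 ≤ Q s := by
      rcases eq_or_lt_of_le hQτ with heq | hlt
      · have := aux_right_pos (hQ τ hTτ) heq.symm (hc τ hTτ hPτ heq.symm)
        exact this.mono (fun s hs => hs.le)
      · have h1 : ∀ᶠ s in 𝓝 τ, 0 < Q s :=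
          ((hQ τ hTτ).continuousAt).eventually (eventually_gt_nhds hlt)
        exact (eventually_nhdsWithin_of_eventually_nhds h1).mono (fun s hs => hs.le)
    have hPnbhd : ∀ᶠ s in 𝓝[>] τ, 0 ≤ P s := by
      rcases eq_or_lt_of_le hPτ with heqP | hltP
      · -- P τ = 0
        rcases eq_or_lt_of_le hQτ with heqQ | hltQ
        · -- corner case : P τ = 0, Q τ = 0 ; use second derivative
          set g : ℝ → ℝ := fun t => Q t - k * P t with hgdef
          have hg0 : g τ = 0 := by simp [hgdef, ← heqP, ← heqQ]
          have hgder : HasDerivAt g (Qd τ - k * (Q τ - k * P τ)) τ :=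
            (hQ τ hTτ).sub ((hP τ hTτ).const_mul k)
          have hgder' : HasDerivAt g (Qd τ) τ := by
            convert hgder using 1
            rw [← heqP, ← heqQ]; ring
          have hgpos := aux_right_pos hgder' hg0 (hc τ hTτ hPτ heqQ.symm)
          obtain ⟨u, hu, hsub⟩ := mem_nhdsGT_iff_exists_Ioo_subset.1 hgpos
          -- P is strictly monotone on Icc τ u' for suitable u'
          have hmono : StrictMonoOn P (Icc τ u) := by
            apply strictMonoOn_of_deriv_pos (convex_Icc τ u)
            · intro x hx
              exact ((hP x (le_trans hTτ hx.1)).continuousAt).continuousWithinAt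
            · intro x hx
              rw [interior_Icc] at hx
              rw [(hP x (le_trans hTτ hx.1.le)).deriv]
              exact hsub hx
          have hIoo : Ioo τ u ∈ 𝓝[>] τ := Ioo_mem_nhdsGT_of_mem ⟨le_refl τ, hu⟩
          filter_upwards [hIoo] with s hs
          have := hmono (left_mem_Icc.2 (le_of_lt hu)) ⟨hs.1.le, hs.2.le⟩ hs.1
          rw [← heqP] at this
          exact this.le
        · -- P τ = 0, Q τ > 0 : derivative of P at τ is positive
          have hder : HasDerivAt P (Q τ - k * P τ) τ := hP τ hTτ
          have hval : 0 < Q τ - k * P τ := by rw [← heqP]; simpa using hltQ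
          exact (aux_right_pos hder heqP.symm hval).mono (fun s hs => hs.le)
      · have h1 : ∀ᶠ s in 𝓝 τ, 0 < P s :=
          ((hP τ hTτ).continuousAt).eventually (eventually_gt_nhds hltP)
        exact (eventually_nhdsWithin_of_eventually_nhds h1).mono (fun s hs => hs.le)
    obtain ⟨u, hu, hsub⟩ := mem_nhdsGT_iff_exists_Ioo_subset.1 (hPnbhd.and hQnbhd)
    have hτu : τ < u := hu
    obtain ⟨b, hb, hbu⟩ := (csInf_lt_iff hbdd hBadne).1 (show sInf Bad < u from hτu)
    have hbτ : τ ≤ b := csInf_le hbdd hb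
    rcases eq_or_lt_of_le hbτ with heq | hlt
    · rcases hb.2 with h | h
      · rw [← heq] at h; exact absurd hPτ (not_le.2 h)
      · rw [← heq] at h; exact absurd hQτ (not_le.2 h)
    · have := hsub ⟨hlt, hbu⟩
      rcases hb.2 with h | h
      · exact absurd this.1 (not_le.2 h)
      · exact absurd this.2 (not_le.2 h)
  -- main case split
  by_cases hex : ∃ t₀, T ≤ t₀ ∧ 0 ≤ P t₀ ∧ 0 ≤ Q t₀
  · obtain ⟨t₀, h1, h2, h3⟩ := hex
    exact Or.inl ⟨t₀, h1, fun t ht => (inv t₀ h1 h2 h3 t ht).1⟩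
  · push_neg at hex
    by_cases hz : ∃ τ, T ≤ τ ∧ P τ = 0
    · obtain ⟨τ, hTτ, hPτ0⟩ := hz
      have hQτ : Q τ < 0 := hex τ hTτ (le_of_eq hPτ0.symm)
      have hder : HasDerivAt P (Q τ - k * P τ) τ := hP τ hTτ
      have hval : Q τ - k * P τ < 0 := by rw [hPτ0]; simpa using hQτ
      have hright := aux_right_neg hder hPτ0 hval
      obtain ⟨u₀, hu₀, hsub₀⟩ := mem_nhdsGT_iff_exists_Ioo_subset.1 hright
      refine Or.inr ⟨τ, hTτ, ?_⟩
      have claim : ∀ t, τ < t → P t < 0 := by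
        by_contra hcl
        push_neg at hcl
        obtain ⟨t₂, ht₂, hPt₂⟩ := hcl
        set S : Set ℝ := {t | τ < t ∧ 0 ≤ P t} with hSdef
        have hSne : S.Nonempty := ⟨t₂, ht₂, hPt₂⟩
        have hSbdd : BddBelow S := ⟨τ, fun s hs => hs.1.le⟩
        set τ' := sInf S with hτ'def
        have hτ'_lb : ∀ s ∈ S, u₀ ≤ s := by
          intro s hs
          by_contra hsu
          push_neg at hsu
          exact absurd hs.2 (not_le.2 (hsub₀ ⟨hs.1, hsu⟩))
        have hττ' : τ < τ' := lt_of_lt_of_le hu₀ (le_csInf hSne hτ'_lb)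
        have hTτ' : T ≤ τ' := le_trans hTτ hττ'.le
        have hneg : ∀ s, τ < s → s < τ' → P s < 0 := by
          intro s h1 h2
          by_contra hp
          push_neg at hp
          exact absurd (csInf_le hSbdd ⟨h1, hp⟩) (not_le.2 h2)
        have hPτ'le : P τ' ≤ 0 := by
          have hcont : ContinuousWithinAt P (Iio τ') τ' :=
            ((hP τ' hTτ').continuousAt).continuousWithinAt
          refine le_of_tendsto hcont.tendsto ?_
          have hIoo : Ioo τ τ' ∈ 𝓝[<] τ' := Ioo_mem_nhdsLT_of_mem ⟨hττ', le_refl τ'⟩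
          filter_upwards [hIoo] with s hs
          exact (hneg s hs.1 hs.2).le
        have hPτ'ge : 0 ≤ P τ' := by
          by_contra hpneg
          push_neg at hpneg
          have h1 : ∀ᶠ s in 𝓝 τ', P s < 0 :=
            ((hP τ' hTτ').continuousAt).eventually (eventually_lt_nhds hpneg)
          obtain ⟨δ, hδ, hball⟩ := Metric.eventually_nhds_iff.1 h1
          have hlb : ∀ s ∈ S, τ' + δ/2 ≤ s := by
            intro s hs
            by_contra hsl
            push_neg at hsl
            have hs1 : τ' ≤ s := csInf_le hSbdd hs
            have : dist s τ' < δ := by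
              rw [Real.dist_eq, abs_of_nonneg (by linarith)]
              linarith
            exact absurd hs.2 (not_le.2 (hball this))
          have := le_csInf hSne hlb
          linarith
        have hPτ'0 : P τ' = 0 := le_antisymm hPτ'le hPτ'ge
        have hQτ' : Q τ' < 0 := hex τ' hTτ' (le_of_eq hPτ'0.symm)
        have hval' : Q τ' - k * P τ' < 0 := by rw [hPτ'0]; simpa using hQτ'
        have hleft := aux_left_pos (hP τ' hTτ') hPτ'0 hval'
        have hIoo : Ioo τ τ' ∈ 𝓝[<] τ' := Ioo_mem_nhdsLT_of_mem ⟨hττ', le_refl τ'⟩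
        have hcontra : ∀ᶠ s in 𝓝[<] τ', False := by
          filter_upwards [hleft, hIoo] with s h1 h2
          exact absurd (hneg s h2.1 h2.2) (not_lt.2 h1.le)
        exact hcontra.exists.elim (fun _ h => h)
      intro t ht
      rcases eq_or_lt_of_le ht with heq | hlt
      · rw [← heq, hPτ0]
      · exact (claim t hlt).le
    · push_neg at hz
      rcases lt_or_gt_of_ne (hz T (le_refl T)) with hneg | hpos
      · refine Or.inr ⟨T, le_refl T, fun t ht => ?_⟩
        by_contra hp
        push_neg at hp
        have hcont : ContinuousOn P (Icc T t) := fun x hx =>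
          ((hP x hx.1).continuousAt).continuousWithinAt
        have h0mem : (0:ℝ) ∈ Icc (P T) (P t) := ⟨hneg.le, hp.le⟩
        obtain ⟨s, hs, hPs⟩ := intermediate_value_Icc ht hcont h0mem
        exact hz s hs.1 hPs
      · refine Or.inl ⟨T, le_refl T, fun t ht => ?_⟩
        by_contra hp
        push_neg at hp
        have hcont : ContinuousOn P (Icc T t) := fun x hx =>
          ((hP x hx.1).continuousAt).continuousWithinAt
        have h0mem : (0:ℝ) ∈ Icc (P t) (P T) := ⟨hp.le, hpos.le⟩
        obtain ⟨s, hs, hPs⟩ := intermediate_value_Icc' ht hcont h0mem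
        exact hz s hs.1 hPs

/-- Asymptotics at infinity: `x^γ v'(x) → (γ/(β + μ(1−γ) + σ²γ(1−γ)/2))^γ > 0` as `x → ∞`. -/
theorem isoelastic_hjb_deriv_asymptotics
    (α γ μ σ β : ℝ) (hα0 : 0 < α) (hα1 : α < 1) (hγ0 : 0 < γ) (hγ1 : γ < 1)
    (hμ : 0 < μ) (hσ : 0 < σ) (hβ : 0 < β)
    (v v' v'' : ℝ → ℝ)
    (hv'deriv : ∀ x > (0 : ℝ), HasDerivAt v (v' x) x)
    (hv''deriv : ∀ x > (0 : ℝ), HasDerivAt v' (v'' x) x)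
    (hv''cont : ContinuousOn v'' (Ioi 0))
    (hvnonneg : ∀ x > (0 : ℝ), 0 ≤ v x)
    (hconc : ConcaveOn ℝ (Ioi 0) v)
    (hv'pos : ∀ x > (0 : ℝ), 0 < v' x)
    (hHJB : ∀ x > (0 : ℝ), β * v x =
      (1 / 2) * σ ^ 2 * x ^ 2 * v'' x + (x ^ α - μ * x) * v' x
        + (γ / (1 - γ)) * (v' x) ^ ((γ - 1) / γ))
    (C₁ : ℝ) (hC₁ : 0 < C₁)
    (hlow : ∀ x > (0 : ℝ), C₁ * x ^ (1 - γ) ≤ v x) :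
    0 < (γ / (β + μ * (1 - γ) + (1 / 2) * σ ^ 2 * γ * (1 - γ))) ^ γ ∧
      Tendsto (fun x => x ^ γ * v' x) atTop
        (𝓝 ((γ / (β + μ * (1 - γ) + (1 / 2) * σ ^ 2 * γ * (1 - γ))) ^ γ)) := by
  have hγ1' : (0:ℝ) < 1 - γ := by linarith
  have hγne : γ ≠ 0 := ne_of_gt hγ0
  have hσ2 : (0:ℝ) < σ^2 := by positivity
  have hα1' : (0:ℝ) < 1 - α := by linarith
  set p : ℝ := (γ-1)/γ with hpdef
  clear_value p
  have hpneg : p < 0 := by rw [hpdef]; exact div_neg_of_neg_of_pos (by linarith) hγ0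
  -- tangent line inequality and slope bound
  have htan : ∀ x y : ℝ, 0 < x → x < y → v y - v x ≤ v' x * (y - x) :=
    fun x y hx hxy => (concave_slope_bounds hconc (fun x hx => hv'deriv x hx) x y hx hxy).1
  have hv''np : ∀ x, 0 < x → v'' x ≤ 0 :=
    deriv2_nonpos hconc (fun x hx => hv'deriv x hx) (fun x hx => hv''deriv x hx)
  -- G ≤ 0
  have hGle : ∀ x, 0 < x →
      β * v x - (x ^ α - μ * x) * v' x - (γ/(1-γ)) * (v' x) ^ p ≤ 0 := by
    intro x hx
    have h1 : (1/2) * σ^2 * x^2 * v'' x ≤ 0 :=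
      mul_nonpos_of_nonneg_of_nonpos (by positivity) (hv''np x hx)
    have h2 := hHJB x hx
    linarith
  -- threshold X₀
  set X₀ : ℝ := max 1 ((2/μ) ^ ((1-α)⁻¹)) with hX₀def
  clear_value X₀
  have hX₀1 : (1:ℝ) ≤ X₀ := by rw [hX₀def]; exact le_max_left _ _
  have hX₀pos : (0:ℝ) < X₀ := lt_of_lt_of_le one_pos hX₀1
  have hxα : ∀ x, X₀ ≤ x → x ^ (α-1) ≤ μ/2 := by
    intro x hX₀x
    have hxpos : 0 < x := lt_of_lt_of_le hX₀pos hX₀x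
    have h2μ : (0:ℝ) < 2/μ := by positivity
    have hb : (2/μ) ^ ((1-α)⁻¹) ≤ x := by
      refine le_trans ?_ hX₀x
      rw [hX₀def]; exact le_max_right _ _
    have h1 : 2/μ ≤ x ^ (1-α) := by
      calc 2/μ = ((2/μ) ^ ((1-α)⁻¹)) ^ (1-α) := by
            rw [← Real.rpow_mul h2μ.le]
            rw [inv_mul_cancel₀ (ne_of_gt hα1')]
            rw [Real.rpow_one]
      _ ≤ x ^ (1-α) := Real.rpow_le_rpow (Real.rpow_nonneg h2μ.le _) hb hα1'.le
    have h3 : x ^ (α-1) = (x ^ (1-α))⁻¹ := by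
      rw [show α-1 = -(1-α) by ring, Real.rpow_neg hxpos.le]
    rw [h3]
    have h4 : (0:ℝ) < x ^ (1-α) := Real.rpow_pos_of_pos hxpos _
    calc (x ^ (1-α))⁻¹ ≤ (2/μ)⁻¹ := by
          apply inv_anti₀ h2μ h1
    _ = μ/2 := by rw [inv_div]
  -- upper bound on x^γ v'
  set c₀ : ℝ := 2*γ/((1-γ)*μ) with hc₀def
  clear_value c₀
  have hc₀pos : 0 < c₀ := by rw [hc₀def]; positivity
  set Mη : ℝ := c₀ ^ γ with hMηdef
  clear_value Mη
  have hMηpos : 0 < Mη := by rw [hMηdef]; exact Real.rpow_pos_of_pos hc₀pos _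
  have hηup : ∀ x, X₀ ≤ x → v' x ≤ Mη * x ^ (-γ) := by
    intro x hX₀x
    have hxpos : 0 < x := lt_of_lt_of_le hX₀pos hX₀x
    have hu : 0 < v' x := hv'pos x hxpos
    have h1 : (μ * x - x ^ α) * v' x ≤ (γ/(1-γ)) * (v' x) ^ p := by
      have := hGle x hxpos
      have hv0 := hvnonneg x hxpos
      nlinarith
    have hxa : x ^ α = x * x ^ (α-1) := by
      calc x ^ α = x ^ ((1:ℝ) + (α-1)) := by rw [show (1:ℝ)+(α-1) = α by ring]
      _ = x ^ (1:ℝ) * x ^ (α-1) := Real.rpow_add hxpos 1 (α-1)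
      _ = x * x ^ (α-1) := by rw [Real.rpow_one]
    have h2 : μ/2 * x * v' x ≤ (γ/(1-γ)) * (v' x) ^ p := by
      have h3 : x ^ (α-1) ≤ μ/2 := hxα x hX₀x
      have h4 : μ * x - x ^ α ≥ μ/2 * x := by
        rw [hxa]
        nlinarith
      nlinarith
    -- split v' x = v' x ^ (1/γ) * v' x ^ p
    have hsplit : v' x = (v' x) ^ (1/γ) * (v' x) ^ p := by
      rw [← Real.rpow_add hu, hpdef]
      rw [show 1/γ + (γ-1)/γ = 1 by field_simp; ring]
      rw [Real.rpow_one]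
    have hup : 0 < (v' x) ^ p := Real.rpow_pos_of_pos hu _
    have h5 : μ/2 * x * (v' x) ^ (1/γ) ≤ γ/(1-γ) := by
      have h6 : (μ/2 * x * (v' x) ^ (1/γ)) * (v' x) ^ p ≤ (γ/(1-γ)) * (v' x) ^ p := by
        calc (μ/2 * x * (v' x) ^ (1/γ)) * (v' x) ^ p
            = μ/2 * x * ((v' x) ^ (1/γ) * (v' x) ^ p) := by ring
        _ = μ/2 * x * v' x := by rw [← hsplit]
        _ ≤ (γ/(1-γ)) * (v' x) ^ p := h2
      exact le_of_mul_le_mul_right h6 hup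
    have h7 : (v' x) ^ (1/γ) ≤ c₀ / x := by
      rw [hc₀def, div_div]
      rw [le_div_iff₀ (by positivity)]
      calc (v' x) ^ (1/γ) * ((1-γ)*μ*x) = ((1-γ)*2) * (μ/2 * x * (v' x) ^ (1/γ)) := by ring
      _ ≤ ((1-γ)*2) * (γ/(1-γ)) := by
            apply mul_le_mul_of_nonneg_left h5 (by positivity)
      _ = 2*γ := by field_simp
    calc v' x = ((v' x) ^ (1/γ)) ^ γ := by
          rw [← Real.rpow_mul hu.le, one_div, inv_mul_cancel₀ hγne, Real.rpow_one]
    _ ≤ (c₀ / x) ^ γ := Real.rpow_le_rpow (Real.rpow_nonneg hu.le _) h7 hγ0.le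
    _ = Mη * x ^ (-γ) := by
          rw [Real.div_rpow hc₀pos.le hxpos.le, Real.rpow_neg hxpos.le, hMηdef]
          ring

  -- upper bound for v
  have hvup : ∀ x, X₀ ≤ x → v x ≤ v X₀ + (Mη/(1-γ)) * x ^ (1-γ) := by
    intro x hX₀x
    set D : ℝ → ℝ := fun y => v X₀ + (Mη/(1-γ))*(y ^ (1-γ) - X₀ ^ (1-γ)) - v y with hDdef
    have hDd : ∀ y, 0 < y → HasDerivAt D ((Mη/(1-γ))*((1-γ)*y^(1-γ-1)) - v' y) y := by
      intro y hy
      exact ((((Real.hasDerivAt_rpow_const (Or.inl (ne_of_gt hy))).sub_const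
        (X₀ ^ (1-γ))).const_mul (Mη/(1-γ))).const_add (v X₀)).sub (hv'deriv y hy)
    have hDval : ∀ y, X₀ ≤ y → (Mη/(1-γ))*((1-γ)*y^(1-γ-1)) - v' y = Mη * y ^ (-γ) - v' y := by
      intro y hy
      have : (Mη/(1-γ))*((1-γ)*y^(1-γ-1)) = Mη * y ^ (-γ) := by
        rw [show (1-γ-1 : ℝ) = -γ by ring]
        field_simp
      rw [this]
    have hmono : MonotoneOn D (Ici X₀) := by
      apply monotoneOn_of_deriv_nonneg (convex_Ici X₀)
      · intro y hy
        exact ((hDd y (lt_of_lt_of_le hX₀pos hy)).continuousAt).continuousWithinAt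
      · intro y hy
        rw [interior_Ici] at hy
        exact ((hDd y (lt_of_lt_of_le hX₀pos (le_of_lt hy))).differentiableAt).differentiableWithinAt
      · intro y hy
        rw [interior_Ici] at hy
        have hy' : X₀ ≤ y := le_of_lt hy
        have hypos : 0 < y := lt_of_lt_of_le hX₀pos hy'
        rw [(hDd y hypos).deriv, hDval y hy']
        have := hηup y hy'
        linarith
    have h0 : D X₀ ≤ D x := hmono (self_mem_Ici) (mem_Ici.2 hX₀x) hX₀x
    have hDX₀ : D X₀ = 0 := by simp [hDdef]
    rw [hDX₀] at h0
    have hX₀γ : 0 ≤ X₀ ^ (1-γ) := (Real.rpow_pos_of_pos hX₀pos _).le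
    have hcoef : 0 < Mη/(1-γ) := by positivity
    simp only [hDdef] at h0
    nlinarith
  -- w bounds
  set Mw : ℝ := v X₀ * X₀ ^ (γ-1) + Mη/(1-γ) with hMwdef
  clear_value Mw
  have hwup : ∀ x, X₀ ≤ x → x ^ (γ-1) * v x ≤ Mw := by
    intro x hX₀x
    have hxpos : 0 < x := lt_of_lt_of_le hX₀pos hX₀x
    have hxg : 0 < x ^ (γ-1) := Real.rpow_pos_of_pos hxpos _
    have h1 : x ^ (γ-1) * v x ≤ x ^ (γ-1) * (v X₀ + (Mη/(1-γ)) * x ^ (1-γ)) :=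
      mul_le_mul_of_nonneg_left (hvup x hX₀x) hxg.le
    have h2 : x ^ (γ-1) * x ^ (1-γ) = 1 := by
      rw [← Real.rpow_add hxpos]
      norm_num
    have h3 : x ^ (γ-1) ≤ X₀ ^ (γ-1) := by
      have e1 : x ^ (γ-1) = (x ^ (1-γ))⁻¹ := by
        rw [show (γ-1 : ℝ) = -(1-γ) by ring, Real.rpow_neg hxpos.le]
      have e2 : X₀ ^ (γ-1) = (X₀ ^ (1-γ))⁻¹ := by
        rw [show (γ-1 : ℝ) = -(1-γ) by ring, Real.rpow_neg hX₀pos.le]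
      rw [e1, e2]
      apply inv_anti₀ (Real.rpow_pos_of_pos hX₀pos _)
      exact Real.rpow_le_rpow hX₀pos.le hX₀x hγ1'.le
    have hvX₀ : 0 ≤ v X₀ := hvnonneg X₀ hX₀pos
    calc x ^ (γ-1) * v x ≤ x ^ (γ-1) * v X₀ + (Mη/(1-γ)) * (x ^ (γ-1) * x ^ (1-γ)) := by
          linarith [h1, mul_left_cancel₀ (ne_of_gt hxg) (rfl : x ^ (γ-1) * (v X₀ + (Mη/(1-γ)) * x ^ (1-γ)) = x ^ (γ-1) * (v X₀ + (Mη/(1-γ)) * x ^ (1-γ))), (by ring : x ^ (γ-1) * (v X₀ + (Mη/(1-γ)) * x ^ (1-γ)) = x ^ (γ-1) * v X₀ + (Mη/(1-γ)) * (x ^ (γ-1) * x ^ (1-γ)))]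
    _ = x ^ (γ-1) * v X₀ + Mη/(1-γ) := by rw [h2]; ring
    _ ≤ X₀ ^ (γ-1) * v X₀ + Mη/(1-γ) := by
          have := mul_le_mul_of_nonneg_right h3 hvX₀
          linarith
    _ = Mw := by rw [hMwdef]; ring
  have hMwpos : 0 < Mw := by
    have : 0 ≤ v X₀ * X₀ ^ (γ-1) :=
      mul_nonneg (hvnonneg X₀ hX₀pos) (Real.rpow_pos_of_pos hX₀pos _).le
    have : 0 < Mη/(1-γ) := by positivity
    rw [hMwdef]
    nlinarith [mul_nonneg (hvnonneg X₀ hX₀pos) (Real.rpow_pos_of_pos hX₀pos (γ-1)).le]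
  have hwlow : ∀ x, 0 < x → C₁ ≤ x ^ (γ-1) * v x := by
    intro x hxpos
    have hxg : 0 < x ^ (γ-1) := Real.rpow_pos_of_pos hxpos _
    have h1 := hlow x hxpos
    have h2 : x ^ (γ-1) * (C₁ * x ^ (1-γ)) ≤ x ^ (γ-1) * v x :=
      mul_le_mul_of_nonneg_left h1 hxg.le
    have h3 : x ^ (γ-1) * x ^ (1-γ) = 1 := by
      rw [← Real.rpow_add hxpos]
      norm_num
    calc C₁ = C₁ * (x ^ (γ-1) * x ^ (1-γ)) := by rw [h3]; ring
    _ = x ^ (γ-1) * (C₁ * x ^ (1-γ)) := by ring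
    _ ≤ x ^ (γ-1) * v x := h2
  -- lower bound on x^γ v'
  set m : ℝ := max 2 (((Mw+1)/C₁) ^ ((1-γ)⁻¹)) with hmdef
  clear_value m
  have hm2 : (2:ℝ) ≤ m := by rw [hmdef]; exact le_max_left _ _
  have hm1 : (1:ℝ) < m := by linarith
  have hmkey : Mw + 1 ≤ C₁ * m ^ (1-γ) := by
    have hq : (0:ℝ) < (Mw+1)/C₁ := by positivity
    have hb : ((Mw+1)/C₁) ^ ((1-γ)⁻¹) ≤ m := by rw [hmdef]; exact le_max_right _ _
    have h1 : (Mw+1)/C₁ ≤ m ^ (1-γ) := by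
      calc (Mw+1)/C₁ = (((Mw+1)/C₁) ^ ((1-γ)⁻¹)) ^ (1-γ) := by
            rw [← Real.rpow_mul hq.le]
            rw [inv_mul_cancel₀ (ne_of_gt hγ1')]
            rw [Real.rpow_one]
      _ ≤ m ^ (1-γ) := Real.rpow_le_rpow (Real.rpow_nonneg hq.le _) hb hγ1'.le
    rw [div_le_iff₀ hC₁] at h1
    linarith
  set dlt : ℝ := 1/(m-1) with hdltdef
  clear_value dlt
  have hdltpos : 0 < dlt := by
    rw [hdltdef]
    have : (0:ℝ) < m - 1 := by linarith
    positivity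
  have hηlow : ∀ x, X₀ ≤ x → dlt ≤ x ^ γ * v' x := by
    intro x hX₀x
    have hxpos : 0 < x := lt_of_lt_of_le hX₀pos hX₀x
    have hmx : x < m*x := by nlinarith
    have h1 : v (m*x) - v x ≤ v' x * (m*x - x) := htan x (m*x) hxpos hmx
    have h2 : C₁ * (m*x) ^ (1-γ) ≤ v (m*x) := hlow (m*x) (by nlinarith)
    have h3 : (m*x) ^ (1-γ) = m ^ (1-γ) * x ^ (1-γ) :=
      Real.mul_rpow (by linarith) hxpos.le
    have h4 : v x ≤ Mw * x ^ (1-γ) := by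
      have hw := hwup x hX₀x
      have h5 : x ^ (1-γ) * (x ^ (γ-1) * v x) ≤ x ^ (1-γ) * Mw :=
        mul_le_mul_of_nonneg_left hw (Real.rpow_pos_of_pos hxpos _).le
      have h6 : x ^ (1-γ) * x ^ (γ-1) = 1 := by
        rw [← Real.rpow_add hxpos]; norm_num
      calc v x = (x ^ (1-γ) * x ^ (γ-1)) * v x := by rw [h6]; ring
      _ = x ^ (1-γ) * (x ^ (γ-1) * v x) := by ring
      _ ≤ x ^ (1-γ) * Mw := h5
      _ = Mw * x ^ (1-γ) := by ring
    have hx1γ : 0 < x ^ (1-γ) := Real.rpow_pos_of_pos hxpos _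
    have e0 : x ^ (1-γ) ≤ v' x * ((m-1)*x) := by
      have : C₁ * m ^ (1-γ) * x ^ (1-γ) - Mw * x ^ (1-γ) ≤ v' x * (m*x - x) := by
        calc C₁ * m ^ (1-γ) * x ^ (1-γ) - Mw * x ^ (1-γ)
            = C₁ * (m ^ (1-γ) * x ^ (1-γ)) - Mw * x ^ (1-γ) := by ring
        _ ≤ v (m*x) - v x := by rw [← h3]; nlinarith
        _ ≤ v' x * (m*x - x) := h1
      have e1 : (m*x - x) = (m-1)*x := by ring
      rw [e1] at this
      nlinarith
    -- multiply by x^(γ-1)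
    have hxg : 0 < x ^ (γ-1) := Real.rpow_pos_of_pos hxpos _
    have e2 : x ^ (γ-1) * x ^ (1-γ) = 1 := by
      rw [← Real.rpow_add hxpos]; norm_num
    have e3 : x ^ (γ-1) * x = x ^ γ := by
      calc x ^ (γ-1) * x = x ^ (γ-1) * x ^ (1:ℝ) := by rw [Real.rpow_one]
      _ = x ^ γ := by rw [← Real.rpow_add hxpos]; norm_num
    have e4 : 1 ≤ (m-1) * (x ^ γ * v' x) := by
      have := mul_le_mul_of_nonneg_left e0 hxg.le
      rw [e2] at this
      calc (1:ℝ) ≤ x ^ (γ-1) * (v' x * ((m-1)*x)) := this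
      _ = (m-1) * ((x ^ (γ-1) * x) * v' x) := by ring
      _ = (m-1) * (x ^ γ * v' x) := by rw [e3]
    rw [hdltdef, div_le_iff₀ (by linarith : (0:ℝ) < m - 1)]
    nlinarith
  -- ===== Part B : logarithmic time =====
  have hexpc : ∀ (c t : ℝ), HasDerivAt (fun s => Real.exp (c*s)) (c * Real.exp (c*t)) t := by
    intro c t
    have h := (Real.hasDerivAt_exp (c*t)).comp t ((hasDerivAt_id t).const_mul c)
    have h2 : HasDerivAt (fun s => Real.exp (c*s)) (Real.exp (c*t) * (c*1)) t := h
    convert h2 using 1; ring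
  have hrpow_exp : ∀ (c t : ℝ), Real.exp t ^ c = Real.exp (c*t) := by
    intro c t
    rw [Real.rpow_def_of_pos (Real.exp_pos t), Real.log_exp, mul_comm]
  have hvcomp : ∀ t : ℝ, HasDerivAt (fun s => v (Real.exp s)) (v' (Real.exp t) * Real.exp t) t :=
    fun t => (hv'deriv (Real.exp t) (Real.exp_pos t)).comp t (Real.hasDerivAt_exp t)
  have hv'comp : ∀ t : ℝ, HasDerivAt (fun s => v' (Real.exp s)) (v'' (Real.exp t) * Real.exp t) t :=
    fun t => (hv''deriv (Real.exp t) (Real.exp_pos t)).comp t (Real.hasDerivAt_exp t)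
  set Wf : ℝ → ℝ := fun t => Real.exp ((γ-1)*t) * v (Real.exp t) with hWfdef
  clear_value Wf
  set Hf : ℝ → ℝ := fun t => Real.exp (γ*t) * v' (Real.exp t) with hHfdef
  clear_value Hf
  set Pf : ℝ → ℝ := fun t => Hf t - (1-γ)*Wf t with hPfdef
  clear_value Pf
  set Qf : ℝ → ℝ := fun t => γ*Hf t + (2/σ^2)*(β*Wf t
      + (μ - Real.exp ((α-1)*t))*Hf t - (γ/(1-γ))*(Hf t)^p) with hQfdef
  clear_value Qf
  have hHfpos : ∀ t : ℝ, 0 < Hf t := by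
    intro t
    rw [hHfdef]
    exact mul_pos (Real.exp_pos _) (hv'pos _ (Real.exp_pos t))
  have hWd : ∀ t : ℝ, HasDerivAt Wf (Pf t) t := by
    intro t
    have h := (hexpc (γ-1) t).mul (hvcomp t)
    have key : Real.exp ((γ-1)*t) * Real.exp t = Real.exp (γ*t) := by
      rw [← Real.exp_add]; congr 1; ring
    simp only [hWfdef, hPfdef, hHfdef]
    refine h.congr_deriv ?_
    linear_combination (v' (Real.exp t)) * key
  have hHd : ∀ t : ℝ, HasDerivAt Hf (Qf t) t := by
    intro t
    have h := (hexpc γ t).mul (hv'comp t)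
    have hx : (0:ℝ) < Real.exp t := Real.exp_pos t
    have h2 : (1/2) * σ^2 * (Real.exp t)^2 * v'' (Real.exp t) =
        β * v (Real.exp t) - ((Real.exp t) ^ α - μ * Real.exp t) * v' (Real.exp t)
          - (γ/(1-γ)) * (v' (Real.exp t)) ^ p := by
      have := hHJB (Real.exp t) hx
      linarith
    -- identities
    have keyA : Real.exp ((γ-1)*t) * Real.exp t = Real.exp (γ*t) := by
      rw [← Real.exp_add]; congr 1; ring
    have keyB : (Real.exp t) ^ α = Real.exp ((α-1)*t) * Real.exp t := by
      rw [hrpow_exp α t, ← Real.exp_add]; congr 1; ring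
    have keyC : (Hf t) ^ p = Real.exp ((γ-1)*t) * (v' (Real.exp t)) ^ p := by
      simp only [hHfdef]
      rw [Real.mul_rpow (Real.exp_pos _).le (hv'pos _ hx).le]
      rw [hrpow_exp p (γ*t)]
      rw [show p*(γ*t) = (γ-1)*t by rw [hpdef]; field_simp]
    have hne : σ^2*(Real.exp t)^2 ≠ 0 := by positivity
    have hv'' : v'' (Real.exp t) = 2*(β * v (Real.exp t)
        - (Real.exp ((α-1)*t) * Real.exp t - μ*Real.exp t) * v' (Real.exp t)
        - (γ/(1-γ)) * (v' (Real.exp t))^p) / (σ^2 * (Real.exp t)^2) := by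
      rw [eq_div_iff hne]
      rw [keyB] at h2
      linear_combination 2*h2
    simp only [hQfdef]
    rw [keyC]
    simp only [hHfdef, hWfdef]
    refine h.congr_deriv ?_
    rw [hv'', ← keyA]
    field_simp
    ring
  have hPd : ∀ t : ℝ, HasDerivAt Pf (Qf t - (1-γ)*Pf t) t := by
    intro t
    have h := (hHd t).sub ((hWd t).const_mul (1-γ))
    rw [hPfdef] at h ⊢
    exact h
  set Qd : ℝ → ℝ := fun t => γ*Qf t + (2/σ^2)*(β*Pf t
      + ((-((α-1)*Real.exp ((α-1)*t)))*Hf t + (μ - Real.exp ((α-1)*t))*Qf t)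
      - (γ/(1-γ))*(p*(Hf t)^(p-1)*Qf t)) with hQddef
  clear_value Qd
  have hQfd : ∀ t : ℝ, HasDerivAt Qf (Qd t) t := by
    intro t
    have hHp : HasDerivAt (fun s => (Hf s)^p) (p*(Hf t)^(p-1)*Qf t) t := by
      have h := (Real.hasDerivAt_rpow_const (x := Hf t) (p := p)
        (Or.inl (ne_of_gt (hHfpos t)))).comp t (hHd t)
      exact h
    have hexpd : HasDerivAt (fun s => Real.exp ((α-1)*s)) ((α-1)*Real.exp ((α-1)*t)) t :=
      hexpc (α-1) t
    have hmul : HasDerivAt (fun s => (μ - Real.exp ((α-1)*s))*Hf s)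
        ((-((α-1)*Real.exp ((α-1)*t)))*Hf t + (μ - Real.exp ((α-1)*t))*Qf t) t :=
      (hexpd.const_sub μ).mul (hHd t)
    have hinner : HasDerivAt (fun s => β*Wf s + (μ - Real.exp ((α-1)*s))*Hf s
        - (γ/(1-γ))*(Hf s)^p)
        ((β*Pf t + ((-((α-1)*Real.exp ((α-1)*t)))*Hf t + (μ - Real.exp ((α-1)*t))*Qf t))
          - (γ/(1-γ))*(p*(Hf t)^(p-1)*Qf t)) t :=
      (((hWd t).const_mul β).add hmul).sub (hHp.const_mul (γ/(1-γ)))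
    have h := ((hHd t).const_mul γ).add (hinner.const_mul (2/σ^2))
    simp only [hQddef]
    have e : Qf = (fun y => γ * Hf y) + fun y => 2 / σ ^ 2 * (β * Wf y + (μ - Real.exp ((α - 1) * y)) * Hf y - γ / (1 - γ) * Hf y ^ p) := hQfdef
    nth_rewrite 1 [e]
    exact h
  have hckey : ∀ t : ℝ, 0 ≤ Pf t → Qf t = 0 → 0 < Qd t := by
    intro t hP0 hQ0
    have heq : Qd t = (2/σ^2)*(β*Pf t + (1-α)*Real.exp ((α-1)*t)*Hf t) := by
      simp only [hQddef]
      rw [hQ0]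
      ring
    rw [heq]
    have h1 : 0 < (1-α)*Real.exp ((α-1)*t)*Hf t :=
      mul_pos (mul_pos hα1' (Real.exp_pos _)) (hHfpos t)
    have h2 : 0 ≤ β*Pf t := mul_nonneg hβ.le hP0
    have h3 : 0 < 2/σ^2 := by positivity
    exact mul_pos h3 (by linarith)
  -- transfer of bounds
  set T₀ : ℝ := Real.log X₀ with hT₀def
  clear_value T₀
  have hT₀0 : 0 ≤ T₀ := by rw [hT₀def]; exact Real.log_nonneg hX₀1
  have hxt : ∀ t, T₀ ≤ t → X₀ ≤ Real.exp t := by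
    intro t ht
    rw [hT₀def] at ht
    calc X₀ = Real.exp (Real.log X₀) := (Real.exp_log hX₀pos).symm
    _ ≤ Real.exp t := Real.exp_le_exp.2 ht
  have hWeq : ∀ t : ℝ, Wf t = (Real.exp t) ^ (γ-1) * v (Real.exp t) := by
    intro t; simp only [hWfdef]; rw [hrpow_exp (γ-1) t]
  have hHeq : ∀ t : ℝ, Hf t = (Real.exp t) ^ γ * v' (Real.exp t) := by
    intro t; simp only [hHfdef]; rw [hrpow_exp γ t]
  have hWlb : ∀ t, T₀ ≤ t → C₁ ≤ Wf t := fun t _ => by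
    rw [hWeq]; exact hwlow _ (Real.exp_pos t)
  have hWub : ∀ t, T₀ ≤ t → Wf t ≤ Mw := fun t ht => by
    rw [hWeq]; exact hwup _ (hxt t ht)
  have hHlb : ∀ t, T₀ ≤ t → dlt ≤ Hf t := fun t ht => by
    rw [hHeq]; exact hηlow _ (hxt t ht)
  have hHub : ∀ t, T₀ ≤ t → Hf t ≤ Mη := by
    intro t ht
    rw [hHeq]
    have hE : (0:ℝ) < Real.exp t := Real.exp_pos t
    have hEγ : (0:ℝ) < (Real.exp t)^γ := Real.rpow_pos_of_pos hE _
    have h2 := mul_le_mul_of_nonneg_left (hηup _ (hxt t ht)) hEγ.le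
    calc (Real.exp t)^γ * v' (Real.exp t) ≤ (Real.exp t)^γ * (Mη * (Real.exp t)^(-γ)) := h2
    _ = Mη * ((Real.exp t)^γ * (Real.exp t)^(-γ)) := by ring
    _ = Mη := by rw [← Real.rpow_add hE]; norm_num
  -- bound on Qf
  have hrpow_anti : ∀ {a b q : ℝ}, 0 < a → a ≤ b → q ≤ 0 → b ^ q ≤ a ^ q := by
    intro a b q ha hab hq
    have hb : 0 < b := lt_of_lt_of_le ha hab
    rw [show q = -(-q) by ring, Real.rpow_neg hb.le, Real.rpow_neg ha.le]
    exact inv_anti₀ (Real.rpow_pos_of_pos ha _)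
      (Real.rpow_le_rpow ha.le hab (by linarith))
  set BQ : ℝ := γ*Mη + (2/σ^2)*(β*Mw + (μ+1)*Mη + (γ/(1-γ))*dlt^p) with hBQdef
  clear_value BQ
  have hQb : ∀ t, T₀ ≤ t → |Qf t| ≤ BQ := by
    intro t ht
    have hH0 := hHfpos t
    have he1 : 0 < Real.exp ((α-1)*t) := Real.exp_pos _
    have he2 : Real.exp ((α-1)*t) ≤ 1 := by
      rw [Real.exp_le_one_iff]
      have ht0 : 0 ≤ t := le_trans hT₀0 ht
      nlinarith
    have h3 : (Hf t)^p ≤ dlt^p := hrpow_anti hdltpos (hHlb t ht) hpneg.le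
    have h4 : 0 < (Hf t)^p := Real.rpow_pos_of_pos hH0 p
    have hHub' := hHub t ht
    have hWlb' := hWlb t ht
    have hWub' := hWub t ht
    have e1 : β*Wf t ≤ β*Mw := mul_le_mul_of_nonneg_left hWub' hβ.le
    have e2 : 0 ≤ β*Wf t := mul_nonneg hβ.le (le_trans hC₁.le hWlb')
    have e3 : (μ - Real.exp ((α-1)*t))*Hf t ≤ μ*Mη := by nlinarith
    have e4 : -Mη ≤ (μ - Real.exp ((α-1)*t))*Hf t := by nlinarith
    have e5 : 0 < (γ/(1-γ))*(Hf t)^p := mul_pos (by positivity) h4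
    have e6 : (γ/(1-γ))*(Hf t)^p ≤ (γ/(1-γ))*dlt^p :=
      mul_le_mul_of_nonneg_left h3 (by positivity)
    have hc2 : (0:ℝ) < 2/σ^2 := by positivity
    have e7 : 0 ≤ β*Mw := mul_nonneg hβ.le hMwpos.le
    have e8 : 0 ≤ μ*Mη := mul_nonneg hμ.le hMηpos.le
    have inner_ub : β*Wf t + (μ - Real.exp ((α-1)*t))*Hf t - (γ/(1-γ))*(Hf t)^p
        ≤ β*Mw + (μ+1)*Mη + (γ/(1-γ))*dlt^p := by linarith
    have inner_lb : -(β*Mw + (μ+1)*Mη + (γ/(1-γ))*dlt^p)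
        ≤ β*Wf t + (μ - Real.exp ((α-1)*t))*Hf t - (γ/(1-γ))*(Hf t)^p := by linarith
    have m1 := mul_le_mul_of_nonneg_left inner_ub hc2.le
    have m2 := mul_le_mul_of_nonneg_left inner_lb hc2.le
    have g1 : γ*Hf t ≤ γ*Mη := mul_le_mul_of_nonneg_left hHub' hγ0.le
    have g2 : 0 < γ*Hf t := mul_pos hγ0 hH0
    rw [abs_le, hBQdef]
    constructor
    · simp only [hQfdef]
      linarith
    · simp only [hQfdef]
      linarith
  have hPb : ∀ t, T₀ ≤ t → |Pf t| ≤ Mη + (1-γ)*Mw := by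
    intro t ht
    have h1 := hHlb t ht
    have h2 := hHub t ht
    have h3 := hWlb t ht
    have h4 := hWub t ht
    have h5 := mul_le_mul_of_nonneg_left h4 (le_of_lt hγ1')
    have h6 := mul_le_mul_of_nonneg_left h3 (le_of_lt hγ1')
    have h7 : 0 < (1-γ)*C₁ := mul_pos hγ1' hC₁
    rw [abs_le]
    constructor
    · simp only [hPfdef]; linarith
    · simp only [hPfdef]; linarith
  -- ===== Part C : conclusion =====
  have hsign := eventually_sign_definite (P := Pf) (Q := Qf) (Qd := Qd) (k := 1-γ) (T := T₀)
    (fun t _ => hPd t) (fun t _ => hQfd t) (fun t _ hp hq => hckey t hp hq)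
  have hWconv : ∃ L, Tendsto Wf atTop (𝓝 L) := by
    rcases hsign with ⟨T₂, hT₂, hpos⟩ | ⟨T₂, hT₂, hneg⟩
    · have hmono : MonotoneOn Wf (Ici T₂) := by
        apply monotoneOn_of_deriv_nonneg (convex_Ici T₂)
        · exact fun t _ => (hWd t).continuousAt.continuousWithinAt
        · exact fun t _ => (hWd t).differentiableAt.differentiableWithinAt
        · intro t ht
          rw [interior_Ici] at ht
          rw [(hWd t).deriv]
          exact hpos t (le_of_lt ht)
      exact tendsto_of_monotoneOn_bdd hmono (fun t ht => hWub t (le_trans hT₂ ht))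
    · have hmono : MonotoneOn (fun t => -Wf t) (Ici T₂) := by
        apply monotoneOn_of_deriv_nonneg (convex_Ici T₂)
        · exact fun t _ => ((hWd t).neg).continuousAt.continuousWithinAt
        · exact fun t _ => ((hWd t).neg).differentiableAt.differentiableWithinAt
        · intro t ht
          rw [interior_Ici] at ht
          have hdn : HasDerivAt (fun t => -Wf t) (-Pf t) t := (hWd t).neg
          rw [hdn.deriv]
          have := hneg t (le_of_lt ht)
          linarith
      obtain ⟨L, hL⟩ := tendsto_of_monotoneOn_bdd hmono (fun t ht => by
        have := hWlb t (le_trans hT₂ ht)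
        linarith)
      exact ⟨-L, by simpa using hL.neg⟩
  obtain ⟨winf, hWc⟩ := hWconv
  -- Barbalat
  have hBQpos : 0 < BQ := by
    rw [hBQdef]
    have h1 : 0 < γ*Mη := mul_pos hγ0 hMηpos
    have h2 : 0 < β*Mw := mul_pos hβ hMwpos
    have h3 : 0 < (μ+1)*Mη := mul_pos (by linarith) hMηpos
    have h4 : 0 < (γ/(1-γ))*dlt^p := mul_pos (by positivity) (Real.rpow_pos_of_pos hdltpos _)
    have h5 : (0:ℝ) < 2/σ^2 := by positivity
    have h6 : 0 < β*Mw + (μ+1)*Mη + (γ/(1-γ))*dlt^p := by linarith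
    have h7 := mul_pos h5 h6
    linarith
  have hBPpos : 0 < Mη + (1-γ)*Mw := by nlinarith [mul_pos hγ1' hMwpos]
  have hPto0 : Tendsto Pf atTop (𝓝 0) := by
    refine barbalat (T := T₀) (B := BQ + (1-γ)*(Mη + (1-γ)*Mw))
      (by
        have := mul_pos hγ1' hBPpos
        linarith) (fun t _ => hWd t) (fun t _ => hPd t) ?_ hWc
    intro t ht
    have h1 := hQb t ht
    have h2 := hPb t ht
    have h3 : |Qf t - (1-γ)*Pf t| ≤ |Qf t| + |(1-γ)*Pf t| := by
      rw [sub_eq_add_neg]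
      refine le_trans (abs_add_le _ _) ?_
      rw [abs_neg]
    have h4 : |(1-γ)*Pf t| = (1-γ)*|Pf t| := by rw [abs_mul, abs_of_pos hγ1']
    have h5 := mul_le_mul_of_nonneg_left h2 hγ1'.le
    linarith
  have hHc : Tendsto Hf atTop (𝓝 ((1-γ)*winf)) := by
    have h := hPto0.add (hWc.const_mul (1-γ))
    rw [zero_add] at h
    refine h.congr ?_
    intro t
    simp only [hPfdef]
    ring
  have hetapos : 0 < (1-γ)*winf := by
    have h1 : dlt ≤ (1-γ)*winf := by
      refine ge_of_tendsto hHc ?_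
      filter_upwards [eventually_ge_atTop T₀] with t ht
      exact hHlb t ht
    linarith
  have hexp0 : Tendsto (fun t => Real.exp ((α-1)*t)) atTop (𝓝 0) := by
    have h := (tendsto_rpow_neg_atTop hα1').comp Real.tendsto_exp_atTop
    refine h.congr ?_
    intro t
    simp only [Function.comp]
    rw [hrpow_exp (-(1-α)) t, show -(1-α)*t = (α-1)*t by ring]
  have hQc : Tendsto Qf atTop (𝓝 (γ*((1-γ)*winf) + (2/σ^2)*(β*winf
      + (μ - 0)*((1-γ)*winf) - (γ/(1-γ))*((1-γ)*winf)^p))) := by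
    have h1 : Tendsto (fun t => (Hf t)^p) atTop (𝓝 (((1-γ)*winf)^p)) :=
      hHc.rpow_const (Or.inl (ne_of_gt hetapos))
    have t1 := hHc.const_mul γ
    have t2 := hWc.const_mul β
    have t3 := ((tendsto_const_nhds (x := μ)).sub hexp0).mul hHc
    have t4 := h1.const_mul (γ/(1-γ))
    have total := t1.add (((t2.add t3).sub t4).const_mul (2/σ^2))
    refine total.congr ?_
    intro t
    simp only [hQfdef]
  have hQL0 : γ*((1-γ)*winf) + (2/σ^2)*(β*winf
      + (μ - 0)*((1-γ)*winf) - (γ/(1-γ))*((1-γ)*winf)^p) = 0 :=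
    deriv_limit_eq_zero (T := T₀) (fun t _ => hHd t) hHc hQc
  -- algebra : K η = γ η^p
  have hσ2ne : σ^2 ≠ 0 := ne_of_gt hσ2
  have hγ1ne : (1:ℝ)-γ ≠ 0 := ne_of_gt hγ1'
  have hKey : (β + μ*(1-γ) + (1/2)*σ^2*γ*(1-γ))*((1-γ)*winf) - γ*((1-γ)*winf)^p
      = (σ^2*(1-γ)/2) * (γ*((1-γ)*winf) + (2/σ^2)*(β*winf
        + (μ - 0)*((1-γ)*winf) - (γ/(1-γ))*((1-γ)*winf)^p)) := by
    field_simp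
    ring
  rw [hQL0, mul_zero] at hKey
  rw [sub_eq_zero] at hKey
  set K : ℝ := β + μ*(1-γ) + (1/2)*σ^2*γ*(1-γ) with hKdef
  have hKpos : 0 < K := by
    rw [hKdef]
    have a1 := mul_pos hμ hγ1'
    have a2 := mul_pos (mul_pos (show (0:ℝ) < (1/2)*σ^2 by positivity) hγ0) hγ1'
    linarith
  -- η^p = η * η^(-(1/γ))
  have hsplit2 : ((1-γ)*winf)^p = ((1-γ)*winf) * ((1-γ)*winf)^(-(1/γ)) := by
    calc ((1-γ)*winf)^p = ((1-γ)*winf)^((1:ℝ) + (-(1/γ))) := by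
          rw [show (1:ℝ) + (-(1/γ)) = p by rw [hpdef]; field_simp; ring]
    _ = ((1-γ)*winf)^(1:ℝ) * ((1-γ)*winf)^(-(1/γ)) := Real.rpow_add hetapos _ _
    _ = ((1-γ)*winf) * ((1-γ)*winf)^(-(1/γ)) := by rw [Real.rpow_one]
  have hKγ : K = γ * ((1-γ)*winf)^(-(1/γ)) := by
    have h1 : K * ((1-γ)*winf) = (γ * ((1-γ)*winf)^(-(1/γ))) * ((1-γ)*winf) := by
      rw [hKey, hsplit2]
      ring
    exact mul_right_cancel₀ (ne_of_gt hetapos) h1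
  have hinv : (((1-γ)*winf)^(1/γ))⁻¹ = K/γ := by
    rw [← Real.rpow_neg (le_of_lt hetapos)]
    rw [hKγ]
    field_simp
  have hstep : ((1-γ)*winf)^(1/γ) = γ/K := by
    rw [← inv_inv (((1-γ)*winf)^(1/γ)), hinv, inv_div]
  have hfinalval : (1-γ)*winf = (γ/K)^γ := by
    calc (1-γ)*winf = (((1-γ)*winf)^(1/γ))^γ := by
          rw [← Real.rpow_mul (le_of_lt hetapos), one_div, inv_mul_cancel₀ hγne, Real.rpow_one]
    _ = (γ/K)^γ := by rw [hstep]
  -- transfer back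
  have hfin : Tendsto (fun x => x^γ * v' x) atTop (𝓝 ((γ/K)^γ)) := by
    rw [← hfinalval]
    have hcomp : Tendsto (fun x => Hf (Real.log x)) atTop (𝓝 ((1-γ)*winf)) :=
      hHc.comp Real.tendsto_log_atTop
    refine hcomp.congr' ?_
    filter_upwards [eventually_gt_atTop 0] with x hx
    rw [hHeq (Real.log x), Real.exp_log hx]
  exact ⟨Real.rpow_pos_of_pos (div_pos hγ0 hKpos) γ, hfin⟩
end

section
/- Define ζ := ( α / ( β + μ(1−α) + (1/2)σ²α(1−α) ) )^α and v(x) := ζ · ( x^{1−α}/(1−α) + 1/β ) for x > 0. Then v'(x) > 0 and v''(x) < 0 for all x > 0, v is a classical solution on (0,∞) of the HJB equation β v(x) = (1/2)σ²x²v''(x) + (x^α − μx)v'(x) + (α/(1−α))·(v'(x))^{(α−1)/α}, and the associated feedback consumption rate is constant: (v'(x))^{−1/α} / x = ζ^{−1/α} = β/α + (1−α)( μ/α + σ²/2 ) for all x > 0. -/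
open Set Filter Topology

/-- Explicit solution in the case `γ = α`: `v(x) = ζ (x^(1−α)/(1−α) + 1/β)` with
`ζ = (α/(β + μ(1−α) + σ²α(1−α)/2))^α` is strictly increasing, strictly concave, solves
the isoelastic HJB equation, and induces the constant feedback consumption rate
`ζ^(−1/α) = β/α + (1−α)(μ/α + σ²/2)`. -/
theorem explicit_hjb_solution_gamma_eq_alpha
    (α μ σ β : ℝ) (hα0 : 0 < α) (hα1 : α < 1) (hμ : 0 < μ) (hσ : 0 < σ) (hβ : 0 < β)
    (ζ : ℝ) (hζ : ζ = (α / (β + μ * (1 - α) + (1 / 2) * σ ^ 2 * α * (1 - α))) ^ α)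
    (v : ℝ → ℝ) (hv : ∀ x : ℝ, v x = ζ * (x ^ (1 - α) / (1 - α) + 1 / β)) :
    ∀ x > (0 : ℝ),
      0 < deriv v x ∧
      deriv (deriv v) x < 0 ∧
      β * v x = (1 / 2) * σ ^ 2 * x ^ 2 * deriv (deriv v) x
        + (x ^ α - μ * x) * deriv v x
        + (α / (1 - α)) * (deriv v x) ^ ((α - 1) / α) ∧
      (deriv v x) ^ (-(1 / α)) / x = ζ ^ (-(1 / α)) ∧
      ζ ^ (-(1 / α)) = β / α + (1 - α) * (μ / α + σ ^ 2 / 2) := by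
  have h1α : (0:ℝ) < 1 - α := by linarith
  have hαne : α ≠ 0 := hα0.ne'
  have h1αne : (1:ℝ) - α ≠ 0 := h1α.ne'
  set A : ℝ := β + μ * (1 - α) + (1 / 2) * σ ^ 2 * α * (1 - α) with hAdef
  have hA : 0 < A := by
    have h2 : 0 < μ * (1 - α) := mul_pos hμ h1α
    have h3 : 0 < (1 / 2) * σ ^ 2 * α * (1 - α) := by positivity
    rw [hAdef]; linarith
  have hαA : 0 < α / A := div_pos hα0 hA
  have hζpos : 0 < ζ := by rw [hζ]; exact Real.rpow_pos_of_pos hαA α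
  -- derivative of v on (0, ∞)
  have hvfun : v = fun y : ℝ => ζ * (y ^ (1 - α) / (1 - α) + 1 / β) := funext hv
  have hd : ∀ y : ℝ, 0 < y → HasDerivAt v (ζ * y ^ (-α)) y := by
    intro y hy
    have h0 : HasDerivAt (fun y : ℝ => y ^ (1 - α)) ((1 - α) * y ^ (1 - α - 1)) y :=
      Real.hasDerivAt_rpow_const (Or.inl hy.ne')
    have he : (1:ℝ) - α - 1 = -α := by ring
    rw [he] at h0
    have h1 := ((h0.div_const (1 - α)).add_const (1 / β)).const_mul ζ
    rw [hvfun]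
    convert h1 using 1
    case e'_9 => rw [mul_div_cancel_left₀ _ h1αne]
    all_goals rfl
  have derivv : ∀ y : ℝ, 0 < y → deriv v y = ζ * y ^ (-α) := fun y hy => (hd y hy).deriv
  -- key rpow fact : ζ ^ (-(1/α)) = A / α
  have e6 : ζ ^ (-(1 / α)) = A / α := by
    rw [hζ, ← Real.rpow_mul hαA.le]
    have : α * -(1 / α) = -1 := by field_simp
    rw [this, Real.rpow_neg_one, inv_div]
  intro x hx
  have hxne : x ≠ 0 := hx.ne'
  have hdvx : deriv v x = ζ * x ^ (-α) := derivv x hx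
  -- second derivative
  have hsnd : deriv v =ᶠ[𝓝 x] fun y : ℝ => ζ * y ^ (-α) := by
    filter_upwards [Ioi_mem_nhds hx] with y hy using derivv y hy
  have hdd : deriv (deriv v) x = ζ * (-α * x ^ (-α - 1)) := by
    rw [hsnd.deriv_eq]
    exact ((Real.hasDerivAt_rpow_const (p := -α) (Or.inl hxne)).const_mul ζ).deriv
  have hxα : (0:ℝ) < x ^ (-α) := Real.rpow_pos_of_pos hx _
  refine ⟨by rw [hdvx]; positivity, ?_, ?_, ?_, ?_⟩
  · have ht := Real.rpow_pos_of_pos hx (-α - 1)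
    have h' : ζ * (-α * x ^ (-α - 1)) = -(ζ * (α * x ^ (-α - 1))) := by ring
    rw [hdd, h']
    have := mul_pos hζpos (mul_pos hα0 ht)
    linarith
  · -- HJB equation
    -- basic rpow product identities
    have e1 : x ^ (2:ℕ) * x ^ (-α - 1) = x ^ (1 - α) := by
      rw [← Real.rpow_natCast x 2, ← Real.rpow_add hx]
      congr 1
      push_cast; ring
    have e2 : x * x ^ (-α) = x ^ (1 - α) := by
      nth_rewrite 1 [← Real.rpow_one x]
      rw [← Real.rpow_add hx, show (1:ℝ) + -α = 1 - α by ring]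
    have e3 : x ^ α * x ^ (-α) = 1 := by
      rw [← Real.rpow_add hx]
      simp
    have kz : (ζ * x ^ (-α)) ^ ((α - 1) / α) = ζ * (A / α) * x ^ (1 - α) := by
      rw [Real.mul_rpow hζpos.le (Real.rpow_nonneg hx.le _), ← Real.rpow_mul hx.le]
      have hexp : -α * ((α - 1) / α) = 1 - α := by field_simp; ring
      have hsplit : (α - 1) / α = 1 + -(1 / α) := by field_simp; ring
      rw [hexp, hsplit, Real.rpow_add hζpos, Real.rpow_one, e6]
    rw [hv, hdvx, hdd, kz]
    have R1 : (1/2) * σ^2 * x^2 * (ζ * (-α * x ^ (-α - 1)))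
        = -((1/2) * σ^2 * α * ζ) * x ^ (1 - α) := by
      rw [← e1]; ring
    have R2 : (x ^ α - μ * x) * (ζ * x ^ (-α)) = ζ - μ * ζ * x ^ (1 - α) := by
      linear_combination ζ * e3 - μ * ζ * e2
    rw [R1, R2]
    field_simp
    ring
  · rw [hdvx, Real.mul_rpow hζpos.le hxα.le, ← Real.rpow_mul hx.le]
    have : -α * -(1 / α) = 1 := by field_simp
    rw [this, Real.rpow_one, mul_div_assoc, div_self hxne, mul_one]
  · rw [e6, hAdef]; field_simp; ring
end

section
/- Fix L > 0 and define ζ_L := L^{1−α} / ( β + (1−α)( μ + L + ασ²/2 ) ) and v(x) := ζ_L · ( x^{1−α}/(1−α) + 1/β ) for x > 0. Then v is a classical solution on (0,∞) of the linear elliptic equation β v(x) = (1/2)σ²x²v''(x) + (x^α − μx)v'(x) + (L x)^{1−α}/(1−α) − L x v'(x), and v is nonnegative, strictly increasing and concave on (0,∞). -/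
open Set Filter Topology

/-- Explicit solution for the constant consumption rate `L`:
`v(x) = ζ_L (x^(1−α)/(1−α) + 1/β)` with `ζ_L = L^(1−α)/(β + (1−α)(μ + L + ασ²/2))` solves
the associated linear elliptic equation and is nonnegative, strictly increasing and
concave on `(0,∞)`. -/
theorem explicit_solution_constant_consumption
    (α μ σ β L : ℝ) (hα0 : 0 < α) (hα1 : α < 1) (hμ : 0 < μ) (hσ : 0 < σ) (hβ : 0 < β)
    (hL : 0 < L)
    (ζL : ℝ) (hζL : ζL = L ^ (1 - α) / (β + (1 - α) * (μ + L + α * σ ^ 2 / 2)))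
    (v : ℝ → ℝ) (hv : ∀ x : ℝ, v x = ζL * (x ^ (1 - α) / (1 - α) + 1 / β)) :
    (∀ x > (0 : ℝ), β * v x = (1 / 2) * σ ^ 2 * x ^ 2 * deriv (deriv v) x
        + (x ^ α - μ * x) * deriv v x
        + (L * x) ^ (1 - α) / (1 - α) - L * x * deriv v x) ∧
      (∀ x > (0 : ℝ), 0 ≤ v x) ∧
      StrictMonoOn v (Ioi 0) ∧
      ConcaveOn ℝ (Ioi 0) v := by
  have h1α : (0:ℝ) < 1 - α := by linarith
  have hD : 0 < β + (1 - α) * (μ + L + α * σ ^ 2 / 2) := by positivity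
  have hζ0 : 0 < ζL := by rw [hζL]; positivity
  have hkey : ζL * (β + (1 - α) * (μ + L + α * σ ^ 2 / 2)) = L ^ (1 - α) := by
    rw [hζL]; field_simp
  have hvfun : v = fun x : ℝ => ζL * (x ^ (1 - α) / (1 - α) + 1 / β) := funext hv
  -- first derivative
  have hderiv : ∀ x : ℝ, 0 < x → HasDerivAt v (ζL * x ^ (-α)) x := by
    intro x hx
    have h := (Real.hasDerivAt_rpow_const (p := 1 - α) (Or.inl hx.ne'))
    have h2 := ((h.div_const (1 - α)).add_const (1 / β)).const_mul ζL
    rw [hvfun]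
    refine h2.congr_deriv ?_
    rw [show (1 - α - 1 : ℝ) = -α by ring]
    field_simp
  have hderiv_eq : ∀ x : ℝ, 0 < x → deriv v x = ζL * x ^ (-α) := fun x hx =>
    (hderiv x hx).deriv
  -- second derivative
  have hderiv2 : ∀ x : ℝ, 0 < x → deriv (deriv v) x = ζL * (-α) * x ^ (-α - 1) := by
    intro x hx
    have hEv : deriv v =ᶠ[𝓝 x] fun y => ζL * y ^ (-α) := by
      filter_upwards [Ioi_mem_nhds hx] with y hy
      exact hderiv_eq y hy
    rw [hEv.deriv_eq]
    have h := (Real.hasDerivAt_rpow_const (p := -α) (Or.inl hx.ne')).const_mul ζL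
    rw [h.deriv]; ring
  refine ⟨?_, ?_, ?_, ?_⟩
  · intro x hx
    rw [hderiv_eq x hx, hderiv2 x hx, hv x]
    have hA : (0:ℝ) < x ^ (1 - α) := Real.rpow_pos_of_pos hx _
    have h1 : x ^ (-α) = x ^ (1 - α) / x := by
      rw [eq_div_iff hx.ne', ← Real.rpow_add_one hx.ne']
      congr 1; ring
    have h2 : x ^ (-α - 1) = x ^ (1 - α) / x ^ 2 := by
      rw [eq_div_iff (by positivity : (x:ℝ)^2 ≠ 0), sq, ← mul_assoc,
        ← Real.rpow_add_one hx.ne', ← Real.rpow_add_one hx.ne']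
      congr 1; ring
    have h3 : x ^ α = x / x ^ (1 - α) := by
      rw [eq_div_iff hA.ne', ← Real.rpow_add hx]
      simp
    have h4 : (L * x) ^ (1 - α) = L ^ (1 - α) * x ^ (1 - α) :=
      Real.mul_rpow hL.le hx.le
    rw [h1, h2, h3, h4, ← hkey]
    field_simp
    ring
  · intro x hx
    rw [hv x]
    have hA : (0:ℝ) ≤ x ^ (1 - α) := Real.rpow_nonneg hx.le _
    positivity
  · rw [hvfun]
    intro x hx y hy hxy
    have hxy' : x ^ (1 - α) < y ^ (1 - α) :=
      Real.rpow_lt_rpow (le_of_lt hx) hxy h1α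
    show ζL * (x ^ (1 - α) / (1 - α) + 1 / β) < ζL * (y ^ (1 - α) / (1 - α) + 1 / β)
    have h5 : x ^ (1 - α) / (1 - α) < y ^ (1 - α) / (1 - α) :=
      by gcongr
    nlinarith [hζ0]
  · rw [hvfun]
    have hc : ConcaveOn ℝ (Ioi (0:ℝ)) fun x : ℝ => x ^ (1 - α) :=
      (Real.concaveOn_rpow h1α.le (by linarith)).subset
        (fun x hx => mem_Ici.mpr (le_of_lt hx)) (convex_Ioi 0)
    have hc2 := hc.smul (c := ζL / (1 - α)) (by positivity)
    have hc3 := hc2.add (concaveOn_const (ζL / β) (convex_Ioi 0))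
    refine hc3.congr (fun x _ => ?_)
    simp only [Pi.add_apply, smul_eq_mul]
    ring
end

section
/- The value function has a strictly positive limit inferior at the origin: liminf_{x↓0} V(x) > 0, where V(x) := sup_{c ∈ 𝒞} E[ ∫₀^∞ e^{−βt} U( c_t · X^{x,c}_t ) dt ] for x > 0. -/
open MeasureTheory Real Set Filter Topology
open scoped ENNReal

/-- The value function of the stochastic Ramsey problem has a strictly positive limit
inferior at the origin: `liminf_{x↓0} V(x) > 0`. -/
theorem ramsey_value_function_positive_liminf_at_zero
    {Ω : Type*} [MeasurableSpace Ω] (P : Measure Ω) [IsProbabilityMeasure P]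
    (α μ σ β η : ℝ) (hα0 : 0 < α) (hα1 : α < 1) (hμ : 0 < μ) (hσ : 0 < σ) (hβ : 0 < β)
    (hη : η = 1 / (1 - α))
    (W : ℝ → Ω → ℝ)
    (hWsm : ∀ t, StronglyMeasurable (W t))
    (hWpath : ∀ᵐ ω ∂P, ContinuousOn (fun t => W t ω) (Ici 0))
    (hW0 : ∀ᵐ ω ∂P, W 0 ω = 0)
    (hWindep : ∀ (n : ℕ) (t : Fin (n + 1) → ℝ), Monotone t → (∀ i, 0 ≤ t i) →
      ProbabilityTheory.iIndepFun
        (fun i : Fin n => fun ω => W (t i.succ) ω - W (t i.castSucc) ω) P)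
    (hWgauss : ∀ s t : ℝ, 0 ≤ s → s ≤ t →
      P.map (fun ω => W t ω - W s ω) =
        ProbabilityTheory.gaussianReal 0 (Real.toNNReal (t - s)))
    (U : ℝ → ℝ)
    (hUcont : ContinuousOn U (Ici 0)) (hU0 : U 0 = 0)
    (hUnonneg : ∀ y ≥ (0 : ℝ), 0 ≤ U y)
    (hUmono : StrictMonoOn U (Ici 0))
    (hUconc : StrictConcaveOn ℝ (Ici 0) U)
    (U' : ℝ → ℝ) (hU'deriv : ∀ y > (0 : ℝ), HasDerivAt U (U' y) y)
    (hU'0 : Tendsto U' (𝓝[>] 0) atTop) (hU'top : Tendsto U' atTop (𝓝 0))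
    (Adm : (ℝ → Ω → ℝ) → Prop)
    (hAdm : ∀ c, Adm c ↔
      (∀ t ω, 0 ≤ c t ω) ∧
      ProgMeasurable (Filtration.natural W hWsm) c ∧
      (∀ᵐ ω ∂P, ∀ t ≥ (0 : ℝ), IntegrableOn (fun s => c s ω) (Ioc 0 t)))
    (G : (ℝ → Ω → ℝ) → ℝ → Ω → ℝ)
    (hG : ∀ c t ω, G c t ω =
      Real.exp ((∫ s in Ioc (0 : ℝ) t, (1 - α) * (μ + c s ω + σ ^ 2 / 2))
        + (1 - α) * σ * W t ω))
    (X : ℝ → (ℝ → Ω → ℝ) → ℝ → Ω → ℝ)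
    (hX : ∀ x c t ω, X x c t ω =
      (G c t ω) ^ (-η) * (x ^ (1 - α) + (1 - α) * ∫ s in Ioc (0 : ℝ) t, G c s ω) ^ η)
    (J : ℝ → (ℝ → Ω → ℝ) → ℝ≥0∞)
    (hJ : ∀ x c, J x c =
      ∫⁻ ω, (∫⁻ t in Ioi (0 : ℝ),
        ENNReal.ofReal (Real.exp (-β * t) * U (c t ω * X x c t ω))) ∂P)
    (V : ℝ → ℝ≥0∞)
    (hV : ∀ x, V x = ⨆ (c : ℝ → Ω → ℝ) (_ : Adm c), J x c) :
    0 < Filter.liminf V (𝓝[>] 0) := by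
  have h1α : (0:ℝ) < 1 - α := by linarith
  set a : ℝ := (1 - α) * (μ + 1 + σ ^ 2 / 2) with ha_def
  set b : ℝ := (1 - α) * σ with hb_def
  have ha : 0 < a := by have : (0:ℝ) < μ + 1 + σ ^ 2 / 2 := by positivity
                        exact mul_pos h1α this
  have hb : 0 < b := mul_pos h1α hσ
  have hηpos : 0 < η := by rw [hη]; positivity
  -- the constant control
  set c : ℝ → Ω → ℝ := fun _ _ => 1 with hc_def
  have hAdmc : Adm c := by
    rw [hAdm]
    refine ⟨fun _ _ => zero_le_one, progMeasurable_const _ 1, ?_⟩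
    filter_upwards with ω t _
    exact integrableOn_const measure_Ioc_lt_top.ne enorm_ne_top
  -- the events on which the path is bounded by K on [0,2]
  set E : ℕ → Set Ω := fun K =>
    ⋂ (q : ℚ), ⋂ (_ : (q:ℝ) ∈ Icc (0:ℝ) 2), {ω | |W q ω| ≤ (K:ℝ)} with hE_def
  have hEmeas : ∀ K, MeasurableSet (E K) := by
    intro K
    refine MeasurableSet.iInter fun q => MeasurableSet.iInter fun _ => ?_
    exact measurableSet_le ((hWsm q).measurable.abs) measurable_const
  have hEfull : ∀ᵐ ω ∂P, ∃ K : ℕ, ω ∈ E K := by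
    filter_upwards [hWpath] with ω hcont
    have hc2 : ContinuousOn (fun t => |W t ω|) (Icc (0:ℝ) 2) :=
      ((hcont.mono (Icc_subset_Ici_self)).abs)
    obtain ⟨M, hM⟩ := (isCompact_Icc.bddAbove_image hc2).imp (fun M hM => hM)
    refine ⟨⌈M⌉₊, ?_⟩
    simp only [hE_def, mem_iInter, mem_setOf_eq]
    intro q hq
    calc |W q ω| ≤ M := hM (mem_image_of_mem _ hq)
      _ ≤ (⌈M⌉₊ : ℝ) := Nat.le_ceil M
  obtain ⟨K, hK⟩ : ∃ K : ℕ, 0 < P (E K) := by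
    by_contra hcon
    push_neg at hcon
    have hzero : ∀ K, P (E K) = 0 := fun K => le_antisymm (hcon K) zero_le
    have hU1 : P (⋃ K : ℕ, E K) = 1 := by
      have hnull : P (⋃ K : ℕ, E K)ᶜ = 0 := by
        have := hEfull
        rw [ae_iff] at this
        convert this using 2
        ext ω; simp [mem_iUnion]
      have := measure_add_measure_compl (μ := P) (MeasurableSet.iUnion hEmeas)
      rw [hnull, add_zero, measure_univ] at this
      exact this
    have : P (⋃ K : ℕ, E K) ≤ ∑' K : ℕ, P (E K) := measure_iUnion_le _
    rw [hU1] at this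
    simp [hzero] at this
  -- the uniform lower bound
  set δ : ℝ := (Real.exp (2 * a + b * K)) ^ (-η) * ((1 - α) * Real.exp (-(b * K))) ^ η
    with hδ_def
  have hδpos : 0 < δ := by
    apply mul_pos
    · exact Real.rpow_pos_of_pos (Real.exp_pos _) _
    · exact Real.rpow_pos_of_pos (mul_pos h1α (Real.exp_pos _)) _
  have hUδ : 0 < U δ := by
    rw [← hU0]
    exact hUmono (self_mem_Ici) (le_of_lt hδpos) hδpos
  set κ : ℝ≥0∞ := ENNReal.ofReal (Real.exp (-β * 2) * U δ) with hκ_def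
  have hκpos : 0 < κ := by
    rw [hκ_def]
    exact ENNReal.ofReal_pos.2 (mul_pos (Real.exp_pos _) hUδ)
  set L : ℝ≥0∞ := κ * P (E K) with hL_def
  have hLpos : 0 < L := ENNReal.mul_pos hκpos.ne' hK.ne'
  -- main estimate : L ≤ J x c for every x > 0
  have hkey : ∀ x : ℝ, 0 < x → L ≤ J x c := by
    intro x hx
    rw [hJ]
    have hae : ∀ᵐ ω ∂P, (E K).indicator (fun _ => κ) ω ≤
        ∫⁻ t in Ioi (0:ℝ), ENNReal.ofReal (Real.exp (-β * t) * U (c t ω * X x c t ω)) := by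
      filter_upwards [hWpath] with ω hcont
      by_cases hωE : ω ∈ E K
      swap
      · simp [indicator_of_notMem hωE]
      rw [indicator_of_mem hωE]
      -- the path is bounded by K on all of [0,2]
      have hqbound : ∀ q : ℚ, (q:ℝ) ∈ Icc (0:ℝ) 2 → |W q ω| ≤ (K:ℝ) := by
        intro q hq
        simp only [hE_def, mem_iInter, mem_setOf_eq] at hωE
        exact hωE q hq
      have hbound : ∀ s ∈ Icc (0:ℝ) 2, |W s ω| ≤ (K:ℝ) := by
        intro s hs
        by_contra hlt
        push_neg at hlt
        have hcwa : ContinuousWithinAt (fun u => |W u ω|) (Icc (0:ℝ) 2) s :=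
          ((hcont.mono Icc_subset_Ici_self).abs) s hs
        have hmem : {u : ℝ | (K:ℝ) < |W u ω|} ∈ 𝓝[Icc (0:ℝ) 2] s :=
          hcwa (Ioi_mem_nhds hlt)
        obtain ⟨V, hVopen, hsV, hVsub⟩ := mem_nhdsWithin.1 hmem
        obtain ⟨ε, hε, hball⟩ := Metric.isOpen_iff.1 hVopen s hsV
        -- find a rational in the ball intersected with [0,2]
        obtain ⟨q, hq0, hq2, hqball⟩ :
            ∃ q : ℚ, (0:ℝ) ≤ q ∧ (q:ℝ) ≤ 2 ∧ (q:ℝ) ∈ Metric.ball s ε := by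
          rcases lt_or_ge s 2 with h2 | h2
          · obtain ⟨q, hq1, hq2⟩ := exists_rat_btwn (lt_min (by linarith) h2 :
              s < min (s + ε) 2)
            refine ⟨q, le_trans hs.1 hq1.le, (lt_of_lt_of_le hq2 (min_le_right _ _)).le, ?_⟩
            rw [Metric.mem_ball, Real.dist_eq, abs_sub_lt_iff]
            constructor
            · have := lt_of_lt_of_le hq2 (min_le_left _ _); linarith
            · linarith
          · have hs2 : s = 2 := le_antisymm hs.2 h2
            obtain ⟨q, hq1, hq2⟩ := exists_rat_btwn
              (show max (s - ε) 0 < s by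
                apply max_lt (by linarith) (by rw [hs2]; norm_num))
            refine ⟨q, (le_max_right _ _).trans hq1.le, by rw [← hs2]; exact hq2.le, ?_⟩
            rw [Metric.mem_ball, Real.dist_eq, abs_sub_lt_iff]
            constructor
            · linarith
            · have := (le_max_left (s - ε) 0).trans_lt hq1; linarith
        have : (K:ℝ) < |W q ω| := hVsub ⟨hball hqball, ⟨hq0, hq2⟩⟩
        exact absurd (hqbound q ⟨hq0, hq2⟩) (not_le.2 this)
      -- the explicit form of G for the constant control
      have hGeq : ∀ s ∈ Icc (0:ℝ) 2, G c s ω = Real.exp (a * s + b * W s ω) := by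
        intro s hs
        have hfun : (fun u : ℝ => (1 - α) * (μ + c u ω + σ ^ 2 / 2)) = fun _ => a := by
          funext u; simp only [hc_def, ha_def]
        rw [hG, hfun, setIntegral_const]
        simp [Real.volume_Ioc, ENNReal.toReal_ofReal hs.1, mul_comm, hs.1]
      have hGcontOn : ContinuousOn (fun s => Real.exp (a * s + b * W s ω)) (Icc (0:ℝ) 2) := by
        apply Real.continuous_exp.comp_continuousOn
        exact ((continuous_const.mul continuous_id).continuousOn.add
          (continuousOn_const.mul (hcont.mono Icc_subset_Ici_self)))
      -- lower bound on G on [0,2]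
      have hGlb : ∀ s ∈ Icc (0:ℝ) 2, Real.exp (-(b * K)) ≤ G c s ω := by
        intro s hs
        rw [hGeq s hs]
        apply Real.exp_le_exp.2
        have h1 : -(K:ℝ) ≤ W s ω := (abs_le.1 (hbound s hs)).1
        have h2 : 0 ≤ a * s := mul_nonneg ha.le hs.1
        nlinarith [hb]
      -- integrability of G on Ioc 0 t for t ∈ [1,2]
      have hGint : ∀ t ∈ Icc (1:ℝ) 2, IntegrableOn (fun s => G c s ω) (Ioc 0 t) := by
        intro t ht
        have hsub : Icc (0:ℝ) t ⊆ Icc 0 2 := Icc_subset_Icc le_rfl ht.2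
        have h1 : IntegrableOn (fun s => Real.exp (a * s + b * W s ω)) (Icc 0 t) :=
          (hGcontOn.mono hsub).integrableOn_Icc
        have h2 : IntegrableOn (fun s => Real.exp (a * s + b * W s ω)) (Ioc 0 t) :=
          h1.mono_set Ioc_subset_Icc_self
        apply h2.congr_fun ?_ measurableSet_Ioc
        intro s hs
        exact (hGeq s ⟨hs.1.le, hs.2.trans ht.2⟩).symm
      -- lower bound on the integral of G
      have hIlb : ∀ t ∈ Icc (1:ℝ) 2,
          Real.exp (-(b * K)) ≤ ∫ s in Ioc (0:ℝ) t, G c s ω := by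
        intro t ht
        have hconst : IntegrableOn (fun _ : ℝ => Real.exp (-(b * K))) (Ioc 0 t) :=
          integrableOn_const measure_Ioc_lt_top.ne enorm_ne_top
        have hmono : ∫ _ in Ioc (0:ℝ) t, Real.exp (-(b * K)) ≤
            ∫ s in Ioc (0:ℝ) t, G c s ω :=
          setIntegral_mono_on hconst (hGint t ht) measurableSet_Ioc
            (fun s hs => hGlb s ⟨hs.1.le, hs.2.trans ht.2⟩)
        have heq : ∫ _ in Ioc (0:ℝ) t, Real.exp (-(b * K)) = t * Real.exp (-(b * K)) := by
          rw [setIntegral_const]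
          simp [Real.volume_Ioc, ENNReal.toReal_ofReal (by linarith [ht.1] : (0:ℝ) ≤ t),
            (by linarith [ht.1] : (0:ℝ) ≤ t)]
        rw [heq] at hmono
        have : Real.exp (-(b * K)) ≤ t * Real.exp (-(b * K)) :=
          le_mul_of_one_le_left (Real.exp_pos _).le ht.1
        linarith
      -- lower bound on X
      have hXlb : ∀ t ∈ Icc (1:ℝ) 2, δ ≤ X x c t ω := by
        intro t ht
        rw [hX]
        have htIcc : t ∈ Icc (0:ℝ) 2 := ⟨by linarith [ht.1], ht.2⟩
        have hGub : G c t ω ≤ Real.exp (2 * a + b * K) := by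
          rw [hGeq t htIcc]
          apply Real.exp_le_exp.2
          have h1 : W t ω ≤ (K:ℝ) := (abs_le.1 (hbound t htIcc)).2
          nlinarith [ha, hb, ht.2, htIcc.1]
        have hGpos : 0 < G c t ω := by rw [hGeq t htIcc]; exact Real.exp_pos _
        have hfac1 : (Real.exp (2 * a + b * K)) ^ (-η) ≤ (G c t ω) ^ (-η) :=
          Real.rpow_le_rpow_of_nonpos hGpos hGub (by linarith)
        have hfac2 : ((1 - α) * Real.exp (-(b * K))) ^ η ≤
            (x ^ (1 - α) + (1 - α) * ∫ s in Ioc (0:ℝ) t, G c s ω) ^ η := by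
          apply Real.rpow_le_rpow (le_of_lt (mul_pos h1α (Real.exp_pos _))) ?_ hηpos.le
          have h1 : (1 - α) * Real.exp (-(b * K)) ≤
              (1 - α) * ∫ s in Ioc (0:ℝ) t, G c s ω :=
            mul_le_mul_of_nonneg_left (hIlb t ht) h1α.le
          have h2 : 0 ≤ x ^ (1 - α) := Real.rpow_nonneg hx.le _
          linarith
        calc δ = (Real.exp (2 * a + b * K)) ^ (-η) *
              ((1 - α) * Real.exp (-(b * K))) ^ η := hδ_def
          _ ≤ (G c t ω) ^ (-η) *
              (x ^ (1 - α) + (1 - α) * ∫ s in Ioc (0:ℝ) t, G c s ω) ^ η := by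
            apply mul_le_mul hfac1 hfac2
              (Real.rpow_nonneg (le_of_lt (mul_pos h1α (Real.exp_pos _))) _)
              (Real.rpow_nonneg hGpos.le _)
      -- conclude the inner integral bound
      have hptwise : ∀ t ∈ Icc (1:ℝ) 2,
          κ ≤ ENNReal.ofReal (Real.exp (-β * t) * U (c t ω * X x c t ω)) := by
        intro t ht
        apply ENNReal.ofReal_le_ofReal
        have hXt : δ ≤ X x c t ω := hXlb t ht
        have hXnn : (0:ℝ) ≤ X x c t ω := hδpos.le.trans hXt
        have hU1 : U δ ≤ U (X x c t ω) :=
          hUmono.monotoneOn (le_of_lt hδpos) hXnn hXt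
        have hexp : Real.exp (-β * 2) ≤ Real.exp (-β * t) :=
          Real.exp_le_exp.2 (by nlinarith [ht.2, hβ])
        have hUnn : 0 ≤ U δ := hUδ.le
        calc Real.exp (-β * 2) * U δ ≤ Real.exp (-β * t) * U (X x c t ω) :=
              mul_le_mul hexp hU1 hUnn (Real.exp_pos _).le
          _ = Real.exp (-β * t) * U (c t ω * X x c t ω) := by simp [hc_def]
      calc κ = κ * volume (Icc (1:ℝ) 2) := by
            simp [Real.volume_Icc]; norm_num
        _ = ∫⁻ t, (Icc (1:ℝ) 2).indicator (fun _ => κ) t := by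
            rw [lintegral_indicator_const measurableSet_Icc]
        _ ≤ ∫⁻ t, (Ioi (0:ℝ)).indicator
              (fun t => ENNReal.ofReal (Real.exp (-β * t) * U (c t ω * X x c t ω))) t := by
            apply lintegral_mono
            intro t
            by_cases htm : t ∈ Icc (1:ℝ) 2
            · rw [indicator_of_mem htm,
                indicator_of_mem (show t ∈ Ioi (0:ℝ) by exact lt_of_lt_of_le one_pos htm.1)]
              exact hptwise t htm
            · rw [indicator_of_notMem htm]; exact zero_le
        _ = ∫⁻ t in Ioi (0:ℝ),
              ENNReal.ofReal (Real.exp (-β * t) * U (c t ω * X x c t ω)) := by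
            rw [lintegral_indicator measurableSet_Ioi]
    calc L = κ * P (E K) := hL_def
      _ = ∫⁻ ω, (E K).indicator (fun _ => κ) ω ∂P := by
          rw [lintegral_indicator_const (hEmeas K)]
      _ ≤ ∫⁻ ω, (∫⁻ t in Ioi (0:ℝ),
            ENNReal.ofReal (Real.exp (-β * t) * U (c t ω * X x c t ω))) ∂P :=
          lintegral_mono_ae hae
  -- from J to V
  have hVlb : ∀ x : ℝ, 0 < x → L ≤ V x := by
    intro x hx
    rw [hV]
    exact le_trans (hkey x hx) (le_iSup₂ (f := fun c' (_ : Adm c') => J x c') c hAdmc)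
  refine lt_of_lt_of_le hLpos (le_liminf_of_le (by isBoundedDefault) ?_)
  filter_upwards [eventually_mem_nhdsWithin] with x hx
  exact hVlb x hx
end
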